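/- arXiv:1311.2177 — 6 statements merged into one kernel-verified Lean document; each statement's English description precedes it below -/
import Mathlib

section
/- Let X and Y be nontrivial real Banach spaces. If X is locally octahedral, then X ⊕₁ Y (the direct sum with norm ‖(x,y)‖ = ‖x‖ + ‖y‖) is locally octahedral. -/
open Metric Set

noncomputable section

/-- A slice of the closed unit ball determined by `f ∈ S_{X*}` and `α > 0` is
`{x ∈ B_X : f x > 1 - α}`.  `X` has the local diameter 2 property if every slice
of `B_X` has diameter 2. -/
def LocalDiameterTwoProp (X : Type*) [NormedAddCommGroup X] [NormedSpace ℝ X] : Prop :=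
  ∀ f : X →L[ℝ] ℝ, ‖f‖ = 1 → ∀ α : ℝ, 0 < α →
    Metric.diam {x : X | ‖x‖ ≤ 1 ∧ 1 - α < f x} = 2

/-- `X` has the diameter 2 property if every nonempty relatively weakly open
subset of `B_X` has diameter 2. -/
def DiameterTwoProp (X : Type*) [NormedAddCommGroup X] [NormedSpace ℝ X] : Prop :=
  ∀ U : Set (WeakSpace ℝ X), IsOpen U →
    {x : X | ‖x‖ ≤ 1 ∧ toWeakSpace ℝ X x ∈ U}.Nonempty →
    Metric.diam {x : X | ‖x‖ ≤ 1 ∧ toWeakSpace ℝ X x ∈ U} = 2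

/-- `X` has the strong diameter 2 property if every convex combination of slices
of `B_X` has diameter 2. -/
def StrongDiameterTwoProp (X : Type*) [NormedAddCommGroup X] [NormedSpace ℝ X] : Prop :=
  ∀ (n : ℕ) (lam : Fin n → ℝ) (f : Fin n → X →L[ℝ] ℝ) (α : Fin n → ℝ),
    (∀ i, 0 ≤ lam i) → (∑ i, lam i) = 1 → (∀ i, ‖f i‖ = 1) → (∀ i, 0 < α i) →
    Metric.diam {x : X | ∃ g : Fin n → X,
      (∀ i, ‖g i‖ ≤ 1 ∧ 1 - α i < f i (g i)) ∧ x = ∑ i, lam i • g i} = 2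

/-- The dual of `X` has the weak* local diameter 2 property if every weak* slice
`{f ∈ B_{X*} : f x > 1 - α}` (with `x ∈ S_X`, `α > 0`) has diameter 2. -/
def WStarLocalDiameterTwoProp (X : Type*) [NormedAddCommGroup X] [NormedSpace ℝ X] : Prop :=
  ∀ x : X, ‖x‖ = 1 → ∀ α : ℝ, 0 < α →
    Metric.diam {f : X →L[ℝ] ℝ | ‖f‖ ≤ 1 ∧ 1 - α < f x} = 2

/-- The dual of `X` has the weak* diameter 2 property if every nonempty relatively
weak* open subset of `B_{X*}` has diameter 2. -/
def WStarDiameterTwoProp (X : Type*) [NormedAddCommGroup X] [NormedSpace ℝ X] : Prop :=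
  ∀ U : Set (WeakDual ℝ X), IsOpen U →
    {f : X →L[ℝ] ℝ | ‖f‖ ≤ 1 ∧ StrongDual.toWeakDual f ∈ U}.Nonempty →
    Metric.diam {f : X →L[ℝ] ℝ | ‖f‖ ≤ 1 ∧ StrongDual.toWeakDual f ∈ U} = 2

/-- The dual of `X` has the weak* strong diameter 2 property if every convex
combination of weak* slices of `B_{X*}` has diameter 2. -/
def WStarStrongDiameterTwoProp (X : Type*) [NormedAddCommGroup X] [NormedSpace ℝ X] : Prop :=
  ∀ (n : ℕ) (lam : Fin n → ℝ) (x : Fin n → X) (α : Fin n → ℝ),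
    (∀ i, 0 ≤ lam i) → (∑ i, lam i) = 1 → (∀ i, ‖x i‖ = 1) → (∀ i, 0 < α i) →
    Metric.diam {f : X →L[ℝ] ℝ | ∃ g : Fin n → (X →L[ℝ] ℝ),
      (∀ i, ‖g i‖ ≤ 1 ∧ 1 - α i < g i (x i)) ∧ f = ∑ i, lam i • g i} = 2

/-- `X` is locally octahedral. -/
def LocallyOctahedral (X : Type*) [NormedAddCommGroup X] [NormedSpace ℝ X] : Prop :=
  ∀ x : X, ∀ ε : ℝ, 0 < ε → ∃ y : X, ‖y‖ = 1 ∧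
    ∀ s : ℝ, (1 - ε) * (|s| * ‖x‖ + ‖y‖) ≤ ‖s • x + y‖

/-- `X` is weakly octahedral. -/
def WeaklyOctahedral (X : Type*) [NormedAddCommGroup X] [NormedSpace ℝ X] : Prop :=
  ∀ E : Subspace ℝ X, FiniteDimensional ℝ E → ∀ f : X →L[ℝ] ℝ, ‖f‖ ≤ 1 →
    ∀ ε : ℝ, 0 < ε → ∃ y : X, ‖y‖ = 1 ∧
      ∀ x ∈ E, (1 - ε) * (|f x| + ‖y‖) ≤ ‖x + y‖

/-- The norm on `X` is octahedral. -/
def Octahedral (X : Type*) [NormedAddCommGroup X] [NormedSpace ℝ X] : Prop :=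
  ∀ E : Subspace ℝ X, FiniteDimensional ℝ E → ∀ ε : ℝ, 0 < ε →
    ∃ y : X, ‖y‖ = 1 ∧ ∀ x ∈ E, (1 - ε) * (‖x‖ + ‖y‖) ≤ ‖x + y‖


lemma withLp1_norm {X Y : Type*} [NormedAddCommGroup X] [NormedAddCommGroup Y]
    (f : WithLp 1 (X × Y)) : ‖f‖ = ‖f.fst‖ + ‖f.snd‖ := by
  have := WithLp.prod_norm_eq_add (p := 1) (by norm_num) f
  simpa using this

theorem stmt_12 (X Y : Type*) [NormedAddCommGroup X] [NormedSpace ℝ X] [CompleteSpace X] [Nontrivial X]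
    [NormedAddCommGroup Y] [NormedSpace ℝ Y] [CompleteSpace Y] [Nontrivial Y]
    (h : LocallyOctahedral X) :
    LocallyOctahedral (WithLp 1 (X × Y)) := by
  intro v ε hε
  obtain ⟨u, hu1, hu⟩ := h v.fst ε hε
  refine ⟨(WithLp.equiv 1 (X × Y)).symm (u, 0), ?_, ?_⟩
  · rw [withLp1_norm]
    simp [hu1]
  · intro s
    have hN : ‖s • v + (WithLp.equiv 1 (X × Y)).symm (u, 0)‖
        = ‖s • v.fst + u‖ + ‖s • v.snd + 0‖ := withLp1_norm _
    have hz : ‖((WithLp.equiv 1 (X × Y)).symm (u, 0) : WithLp 1 (X × Y))‖ = 1 := by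
      rw [withLp1_norm]; simp [hu1]
    rw [hN, hz, add_zero, norm_smul, Real.norm_eq_abs, withLp1_norm v]
    have key := hu s
    rw [hu1] at key
    have ha : (0:ℝ) ≤ |s| := abs_nonneg s
    have hb : (0:ℝ) ≤ ‖v.snd‖ := norm_nonneg _
    nlinarith [mul_nonneg (mul_nonneg hε.le ha) hb]
end
end

section
/- Let X and Y be nontrivial real Banach spaces and let 1 < p ≤ ∞. If X and Y are both locally octahedral, then X ⊕_p Y is locally octahedral. -/
open Metric Set
open scoped ENNReal

noncomputable section

private lemma myProdNormLe {α β γ δ : Type*} [SeminormedAddCommGroup α]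
    [SeminormedAddCommGroup β] [SeminormedAddCommGroup γ] [SeminormedAddCommGroup δ]
    (p : ℝ≥0∞) [Fact (1 ≤ p)] (x : WithLp p (α × β)) (y : WithLp p (γ × δ))
    (h1 : ‖x.fst‖ ≤ ‖y.fst‖) (h2 : ‖x.snd‖ ≤ ‖y.snd‖) : ‖x‖ ≤ ‖y‖ := by
  by_cases hp : p = ∞
  · subst hp
    rw [WithLp.prod_norm_eq_sup, WithLp.prod_norm_eq_sup]
    exact sup_le_sup h1 h2
  · have hp0 : p ≠ 0 := by
      intro h
      have := Fact.out (p := 1 ≤ p)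
      simp [h] at this
    have ht : 0 < p.toReal := ENNReal.toReal_pos hp0 hp
    rw [WithLp.prod_norm_eq_add ht, WithLp.prod_norm_eq_add ht]
    apply Real.rpow_le_rpow (by positivity)
      (add_le_add (Real.rpow_le_rpow (norm_nonneg _) h1 ht.le)
        (Real.rpow_le_rpow (norm_nonneg _) h2 ht.le)) (by positivity)

private lemma myProdNormEq {α β γ δ : Type*} [SeminormedAddCommGroup α]
    [SeminormedAddCommGroup β] [SeminormedAddCommGroup γ] [SeminormedAddCommGroup δ]
    (p : ℝ≥0∞) [Fact (1 ≤ p)] (x : WithLp p (α × β)) (y : WithLp p (γ × δ))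
    (h1 : ‖x.fst‖ = ‖y.fst‖) (h2 : ‖x.snd‖ = ‖y.snd‖) : ‖x‖ = ‖y‖ :=
  le_antisymm (myProdNormLe p x y h1.le h2.le) (myProdNormLe p y x h1.ge h2.ge)

private lemma myExistsComp {X : Type*} [NormedAddCommGroup X] [NormedSpace ℝ X]
    (hX : LocallyOctahedral X) (x : X) {ε α : ℝ} (hε : 0 < ε) (hα : 0 ≤ α)
    (hαx : x ≠ 0 → 0 < α) :
    ∃ u : X, ‖u‖ = 1 ∧ ∀ s : ℝ, (1 - ε) * (|s| * ‖x‖ + α) ≤ ‖s • x + α • u‖ := by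
  obtain ⟨u, hu1, hu⟩ := hX x ε hε
  refine ⟨u, hu1, fun s => ?_⟩
  by_cases hx : x = 0
  · subst hx
    rw [smul_zero, zero_add, norm_smul, hu1, norm_zero, mul_zero, zero_add,
      Real.norm_eq_abs, abs_of_nonneg hα, mul_one]
    nlinarith
  · have hα0 : 0 < α := hαx hx
    have key := hu (s / α)
    rw [hu1] at key
    have h2 : α • ((s / α) • x + u) = s • x + α • u := by
      rw [smul_add, smul_smul, mul_div_cancel₀ _ hα0.ne']
    calc (1 - ε) * (|s| * ‖x‖ + α) = α * ((1 - ε) * (|s / α| * ‖x‖ + 1)) := by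
          rw [abs_div, abs_of_pos hα0]; field_simp
      _ ≤ α * ‖(s / α) • x + u‖ := by
          exact mul_le_mul_of_nonneg_left key hα0.le
      _ = ‖s • x + α • u‖ := by
          rw [← h2, norm_smul, Real.norm_eq_abs, abs_of_pos hα0]

theorem stmt_13 (X Y : Type*) [NormedAddCommGroup X] [NormedSpace ℝ X] [CompleteSpace X] [Nontrivial X]
    [NormedAddCommGroup Y] [NormedSpace ℝ Y] [CompleteSpace Y] [Nontrivial Y]
    (p : ℝ≥0∞) [Fact (1 ≤ p)] (hp : 1 < p)
    (hX : LocallyOctahedral X) (hY : LocallyOctahedral Y) :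
    LocallyOctahedral (WithLp p (X × Y)) := by
  intro z ε hε
  obtain ⟨x₀, hx₀⟩ := exists_ne (0 : X)
  set w0 : WithLp p (X × Y) := (WithLp.equiv p (X × Y)).symm (‖x₀‖⁻¹ • x₀, 0) with hw0def
  have hw0 : ‖w0‖ = 1 := by
    rw [hw0def, WithLp.equiv_symm_apply, WithLp.norm_toLp_fst, norm_smul, norm_inv, norm_norm,
      inv_mul_cancel₀ (norm_ne_zero_iff.2 hx₀)]
  rcases le_or_gt 1 ε with hε1 | hε1
  · refine ⟨w0, hw0, fun s => ?_⟩
    exact le_trans (mul_nonpos_of_nonpos_of_nonneg (by linarith) (by positivity))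
      (norm_nonneg _)
  have hc : 0 < 1 - ε := by linarith
  by_cases hz : z = 0
  · refine ⟨w0, hw0, fun s => ?_⟩
    subst hz
    rw [smul_zero, zero_add, hw0, norm_zero, mul_zero, zero_add, mul_one]
    linarith
  · have hr : 0 < ‖z‖ := norm_pos_iff.2 hz
    obtain ⟨u, hu1, hu⟩ := myExistsComp hX z.fst hε
      (by positivity : (0:ℝ) ≤ ‖z‖⁻¹ * ‖z.fst‖)
      (fun h => mul_pos (inv_pos.2 hr) (norm_pos_iff.2 h))
    obtain ⟨v, hv1, hv⟩ := myExistsComp hY z.snd hε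
      (by positivity : (0:ℝ) ≤ ‖z‖⁻¹ * ‖z.snd‖)
      (fun h => mul_pos (inv_pos.2 hr) (norm_pos_iff.2 h))
    set w : WithLp p (X × Y) :=
      (WithLp.equiv p (X × Y)).symm ((‖z‖⁻¹ * ‖z.fst‖) • u, (‖z‖⁻¹ * ‖z.snd‖) • v) with hwdef
    have hbase : ∀ t : ℝ, 0 ≤ t →
        ‖(WithLp.equiv p (ℝ × ℝ)).symm (t * ‖z.fst‖, t * ‖z.snd‖)‖ = t * ‖z‖ := by
      intro t ht
      have hq : ‖(WithLp.equiv p (ℝ × ℝ)).symm (‖z.fst‖, ‖z.snd‖)‖ = ‖z‖ := by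
        apply myProdNormEq p _ z
        · simp
        · simp
      have hsm : (WithLp.equiv p (ℝ × ℝ)).symm (t * ‖z.fst‖, t * ‖z.snd‖)
          = t • (WithLp.equiv p (ℝ × ℝ)).symm (‖z.fst‖, ‖z.snd‖) := rfl
      rw [hsm, norm_smul, Real.norm_eq_abs, abs_of_nonneg ht, hq]
    have hwn : ‖w‖ = 1 := by
      have h1 : ‖w‖ = ‖z‖⁻¹ * ‖z‖ := by
        rw [← hbase ‖z‖⁻¹ (by positivity)]
        apply myProdNormEq
        · simp only [hwdef, WithLp.equiv_symm_apply, WithLp.toLp_fst]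
          rw [norm_smul, hu1, mul_one]
        · simp only [hwdef, WithLp.equiv_symm_apply, WithLp.toLp_snd]
          rw [norm_smul, hv1, mul_one]
      rw [h1, inv_mul_cancel₀ hr.ne']
    refine ⟨w, hwn, fun s => ?_⟩
    rw [hwn]
    have key : ‖(WithLp.equiv p (ℝ × ℝ)).symm
        (((1 - ε) * (|s| + ‖z‖⁻¹)) * ‖z.fst‖, ((1 - ε) * (|s| + ‖z‖⁻¹)) * ‖z.snd‖)‖
        ≤ ‖s • z + w‖ := by
      apply myProdNormLe
      · simp only [hwdef, WithLp.equiv_symm_apply, WithLp.toLp_fst, WithLp.add_fst, WithLp.smul_fst]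
        rw [Real.norm_eq_abs, abs_of_nonneg (by positivity)]
        calc (1 - ε) * (|s| + ‖z‖⁻¹) * ‖z.fst‖
            = (1 - ε) * (|s| * ‖z.fst‖ + ‖z‖⁻¹ * ‖z.fst‖) := by ring
          _ ≤ ‖s • z.fst + (‖z‖⁻¹ * ‖z.fst‖) • u‖ := hu s
      · simp only [hwdef, WithLp.equiv_symm_apply, WithLp.toLp_snd, WithLp.add_snd, WithLp.smul_snd]
        rw [Real.norm_eq_abs, abs_of_nonneg (by positivity)]
        calc (1 - ε) * (|s| + ‖z‖⁻¹) * ‖z.snd‖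
            = (1 - ε) * (|s| * ‖z.snd‖ + ‖z‖⁻¹ * ‖z.snd‖) := by ring
          _ ≤ ‖s • z.snd + (‖z‖⁻¹ * ‖z.snd‖) • v‖ := hv s
    rw [hbase _ (by positivity)] at key
    calc (1 - ε) * (|s| * ‖z‖ + 1) = (1 - ε) * (|s| + ‖z‖⁻¹) * ‖z‖ := by
          field_simp
      _ ≤ ‖s • z + w‖ := key
end
end

section
/- Let X and Y be nontrivial real Banach spaces and let 1 < p ≤ ∞. If X ⊕_p Y is locally octahedral, then X is locally octahedral. -/
open Metric Set
open scoped ENNReal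

noncomputable section

section LOHHelpers

variable {X : Type*} [NormedAddCommGroup X] [NormedSpace ℝ X]

lemma aux_unit_norm {u : X} (hu0 : 0 < ‖u‖) : ‖‖u‖⁻¹ • u‖ = 1 := by
  rw [norm_smul, Real.norm_eq_abs, abs_of_nonneg (inv_nonneg.mpr (norm_nonneg u)),
    inv_mul_cancel₀ hu0.ne']

lemma aux_shift {u : X} (hu0 : 0 < ‖u‖) (hu1 : ‖u‖ ≤ 1) (w : X) :
    ‖w + u‖ - (1 - ‖u‖) ≤ ‖w + ‖u‖⁻¹ • u‖ := by
  have h1 : ‖u - ‖u‖⁻¹ • u‖ = 1 - ‖u‖ := by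
    have he : u - ‖u‖⁻¹ • u = (1 - ‖u‖⁻¹) • u := by rw [sub_smul, one_smul]
    have hi : 1 ≤ ‖u‖⁻¹ := (one_le_inv₀ hu0).mpr hu1
    rw [he, norm_smul, Real.norm_eq_abs, abs_of_nonpos (by linarith), neg_sub, sub_mul,
      inv_mul_cancel₀ hu0.ne', one_mul]
  have h2 : ‖w + u‖ ≤ ‖w + ‖u‖⁻¹ • u‖ + ‖u - ‖u‖⁻¹ • u‖ := by
    have he : w + u = (w + ‖u‖⁻¹ • u) + (u - ‖u‖⁻¹ • u) := by abel
    rw [he]; exact norm_add_le _ _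
  rw [h1] at h2; linarith

lemma aux_lb {w : X} {a : ℝ} (y : X) (ha : ‖w‖ ≤ a) : ‖y‖ - a ≤ ‖w + y‖ := by
  have := norm_sub_le (w + y) w
  simp only [add_sub_cancel_left] at this
  linarith

end LOHHelpers

section ProdHelpers

variable (p : ℝ≥0∞) [Fact (1 ≤ p)]
variable (X Y : Type*) [NormedAddCommGroup X] [NormedSpace ℝ X]
  [NormedAddCommGroup Y] [NormedSpace ℝ Y]

lemma aux_decomp (f : WithLp p (X × Y)) :
    f = (WithLp.equiv p (X × Y)).symm (f.fst, 0)
      + (WithLp.equiv p (X × Y)).symm (0, f.snd) := by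
  apply (WithLp.equiv p (X × Y)).injective
  refine Prod.ext ?_ ?_ <;>
    simp [WithLp.ofLp_add]

lemma aux_norm_le_add (f : WithLp p (X × Y)) : ‖f‖ ≤ ‖f.fst‖ + ‖f.snd‖ := by
  calc ‖f‖ = ‖(WithLp.equiv p (X × Y)).symm (f.fst, 0)
      + (WithLp.equiv p (X × Y)).symm (0, f.snd)‖ := by rw [← aux_decomp]
    _ ≤ ‖(WithLp.equiv p (X × Y)).symm ((f.fst : X), (0 : Y))‖
        + ‖(WithLp.equiv p (X × Y)).symm ((0 : X), f.snd)‖ := norm_add_le _ _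
    _ = ‖f.fst‖ + ‖f.snd‖ := by
        rw [WithLp.equiv_symm_apply, WithLp.norm_toLp_fst, WithLp.norm_toLp_snd]

end ProdHelpers

set_option maxHeartbeats 1000000 in
theorem stmt_14 (X Y : Type*) [NormedAddCommGroup X] [NormedSpace ℝ X] [CompleteSpace X] [Nontrivial X]
    [NormedAddCommGroup Y] [NormedSpace ℝ Y] [CompleteSpace Y] [Nontrivial Y]
    (p : ℝ≥0∞) [Fact (1 ≤ p)] (hp : 1 < p)
    (h : LocallyOctahedral (WithLp p (X × Y))) :
    LocallyOctahedral X := by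
  intro x ε hε
  obtain ⟨x0, hx0⟩ := exists_ne (0 : X)
  have hx0n : 0 < ‖x0‖ := norm_pos_iff.mpr hx0
  by_cases hx : x = 0
  · refine ⟨‖x0‖⁻¹ • x0, aux_unit_norm hx0n, fun s => ?_⟩
    rw [hx, smul_zero, zero_add, aux_unit_norm hx0n, norm_zero]
    nlinarith [abs_nonneg s]
  rcases le_or_gt 1 ε with hε1 | hε1
  · refine ⟨‖x0‖⁻¹ • x0, aux_unit_norm hx0n, fun s => ?_⟩
    rw [aux_unit_norm hx0n]
    have h2 : 0 ≤ |s| * ‖x‖ + 1 := by positivity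
    nlinarith [norm_nonneg (s • x + ‖x0‖⁻¹ • x0)]
  have hxn : 0 < ‖x‖ := norm_pos_iff.mpr hx
  set z : WithLp p (X × Y) := (WithLp.equiv p (X × Y)).symm (x, 0) with hzdef
  have hzn : ‖z‖ = ‖x‖ := WithLp.norm_toLp_fst p X Y x
  have hzf : z.fst = x := WithLp.toLp_fst (p := p) (x, 0)
  have hzs : z.snd = 0 := WithLp.toLp_snd (p := p) (x, 0)
  have hcomp : ∀ (s : ℝ) (w : WithLp p (X × Y)),
      (s • z + w).fst = s • x + w.fst ∧ (s • z + w).snd = w.snd := by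
    intro s w
    constructor
    · rw [WithLp.add_fst, WithLp.smul_fst, hzf]
    · rw [WithLp.add_snd, WithLp.smul_snd, hzs, smul_zero, zero_add]
  clear_value z
  rcases eq_or_ne p ⊤ with hptop | hptop
  · -- p = ∞ case
    subst hptop
    set δ : ℝ := ε / 4 with hδdef
    have hδ : 0 < δ := by positivity
    obtain ⟨w, hw, H⟩ := h z δ hδ
    simp only [hw, hzn] at H
    have hwsup : ‖w.fst‖ ⊔ ‖w.snd‖ = 1 := by rw [← WithLp.prod_norm_eq_sup, hw]
    have hu1 : ‖w.fst‖ ≤ 1 := hwsup ▸ le_sup_left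
    have hv1 : ‖w.snd‖ ≤ 1 := hwsup ▸ le_sup_right
    have hsz : ∀ s : ℝ, ‖s • z + w‖ = ‖s • x + w.fst‖ ⊔ ‖w.snd‖ := by
      intro s
      rw [WithLp.prod_norm_eq_sup, (hcomp s w).1, (hcomp s w).2]
    -- evaluate at s = ‖x‖⁻¹
    have H1 := H ‖x‖⁻¹
    rw [hsz, abs_of_pos (inv_pos.mpr hxn), inv_mul_cancel₀ hxn.ne'] at H1
    have hδ4 : δ < 1 / 4 := by rw [hδdef]; linarith
    have hux : ‖‖x‖⁻¹ • x + w.fst‖ ≤ 1 + ‖w.fst‖ := by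
      refine (norm_add_le _ _).trans ?_
      rw [norm_smul, Real.norm_eq_abs, abs_of_pos (inv_pos.mpr hxn), inv_mul_cancel₀ hxn.ne']
    have hU : 1 - 2 * δ ≤ ‖w.fst‖ := by
      rcases le_max_iff.mp H1 with hc | hc
      · linarith
      · linarith
    have hU0 : 0 < ‖w.fst‖ := by linarith
    refine ⟨‖w.fst‖⁻¹ • w.fst, aux_unit_norm hU0, fun s => ?_⟩
    rw [aux_unit_norm hU0]
    have ha0 : 0 ≤ |s| * ‖x‖ := by positivity
    have hsx : ‖s • x‖ ≤ |s| * ‖x‖ := by rw [norm_smul, Real.norm_eq_abs]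
    have Hs := H s
    rw [hsz s] at Hs
    have key := aux_shift hU0 hu1 (s • x)
    rcases le_max_iff.mp Hs with hc | hc
    · nlinarith [mul_nonneg hδ.le ha0]
    · have h1 : (1 - δ) * (|s| * ‖x‖ + 1) ≤ 1 := le_trans hc hv1
      have h2 := aux_lb (w := s • x) (‖w.fst‖⁻¹ • w.fst) hsx
      rw [aux_unit_norm hU0] at h2
      nlinarith [mul_nonneg hδ.le ha0]
  · -- p < ∞ case
    set q : ℝ := p.toReal with hqdef
    have hq1 : 1 < q := by
      rw [hqdef, ← ENNReal.toReal_one]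
      exact (ENNReal.toReal_lt_toReal (by simp) hptop).mpr hp
    have hq0 : 0 < q := by linarith
    have root : ∀ t : ℝ, 0 ≤ t → (t ^ q) ^ (1 / q) = t := fun t ht => by
      rw [one_div, Real.rpow_rpow_inv ht hq0.ne']
    have hnf : ∀ f : WithLp p (X × Y), ‖f‖ = (‖f.fst‖ ^ q + ‖f.snd‖ ^ q) ^ (1 / q) :=
      fun f => WithLp.prod_norm_eq_add hq0 f
    clear_value q
    -- constants
    set c : ℝ := q * ((2 : ℝ) ^ (q - 1) - 1) with hcdef
    have h2q : (1 : ℝ) < (2 : ℝ) ^ (q - 1) :=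
      (Real.one_lt_rpow_iff_of_pos (by norm_num)).mpr (Or.inl ⟨one_lt_two, by linarith⟩)
    have hc : 0 < c := by
      rw [hcdef]; exact mul_pos hq0 (by linarith)
    clear_value c
    set B : ℝ → ℝ := fun δ => (3 : ℝ) ^ q * (1 - (1 - δ) ^ q) / c with hBdef
    clear_value B
    -- choose δ by continuity
    have hcont : ContinuousAt (fun δ : ℝ => δ + B δ + (q * B δ) ^ (1 / q)) 0 := by
      have h1 : ContinuousAt (fun δ : ℝ => (1 - δ) ^ q) 0 := by
        have houter : ContinuousAt (fun t : ℝ => t ^ q) ((fun δ : ℝ => 1 - δ) 0) := by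
          simp only [sub_zero]
          exact Real.continuousAt_rpow_const 1 q (Or.inl one_ne_zero)
        exact houter.comp ((continuous_const.sub continuous_id).continuousAt)
      have hB : ContinuousAt B 0 := by
        rw [hBdef]
        exact (continuousAt_const.mul (continuousAt_const.sub h1)).div_const c
      have hB0 : B 0 = 0 := by
        simp [hBdef, Real.one_rpow]
      have h2 : ContinuousAt (fun δ : ℝ => (q * B δ) ^ (1 / q)) 0 := by
        have houter : ContinuousAt (fun t : ℝ => t ^ (1 / q)) ((fun δ : ℝ => q * B δ) 0) :=
          Real.continuousAt_rpow_const _ _ (Or.inr (by positivity))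
        have hqB : ContinuousAt (fun δ : ℝ => q * B δ) 0 := continuousAt_const.mul hB
        exact ContinuousAt.comp (f := fun δ : ℝ => q * B δ)
          (g := fun t : ℝ => t ^ (1 / q)) houter hqB
      exact (continuousAt_id.add hB).add h2
    have hval : (0 : ℝ) + B 0 + (q * B 0) ^ (1 / q) < ε := by
      have hB0 : B 0 = 0 := by simp [hBdef, Real.one_rpow]
      rw [hB0, mul_zero, Real.zero_rpow (by positivity : (1 / q : ℝ) ≠ 0)]
      linarith
    have hev1 : ∀ᶠ δ in nhds (0 : ℝ), δ + B δ + (q * B δ) ^ (1 / q) < ε :=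
      Filter.Tendsto.eventually_lt_const hval hcont.tendsto
    have hev2 : ∀ᶠ δ in nhds (0 : ℝ), δ < 1 / 2 := by
      filter_upwards [Iio_mem_nhds (show (0 : ℝ) < 1 / 2 by norm_num)] with δ hδ using hδ
    obtain ⟨δ, ⟨hgδ, hδhalf⟩, hδpos⟩ :=
      ((((hev1.and hev2)).filter_mono nhdsWithin_le_nhds).and
        (self_mem_nhdsWithin (s := Ioi (0 : ℝ)))).exists
    have hBnn : 0 ≤ B δ := by
      have h1 : (1 - δ) ^ q ≤ 1 :=
        Real.rpow_le_one (by linarith) (by linarith) hq0.le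
      have h3 : (0 : ℝ) < (3 : ℝ) ^ q := Real.rpow_pos_of_pos (by norm_num) q
      rw [hBdef]
      exact div_nonneg (by nlinarith) hc.le
    have hrootnn : 0 ≤ (q * B δ) ^ (1 / q) := Real.rpow_nonneg (by positivity) _
    -- apply local octahedrality
    obtain ⟨w, hw, H⟩ := h z δ hδpos
    simp only [hw, hzn] at H
    set U : ℝ := ‖w.fst‖ with hUdef
    set V : ℝ := ‖w.snd‖ with hVdef
    clear_value U V
    have hUnn : 0 ≤ U := by rw [hUdef]; exact norm_nonneg _
    have hVnn : 0 ≤ V := by rw [hVdef]; exact norm_nonneg _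
    have hsum : U ^ q + V ^ q = 1 := by
      have h0 : (U ^ q + V ^ q) ^ (1 / q) = 1 := by rw [hUdef, hVdef, ← hnf w, hw]
      have h1 := congrArg (· ^ q) h0
      simp only [Real.one_rpow] at h1
      rwa [one_div, Real.rpow_inv_rpow (by positivity) hq0.ne'] at h1
    have hUq1 : U ^ q ≤ 1 := by linarith [Real.rpow_nonneg hVnn q]
    have hU1 : U ≤ 1 := by
      have := Real.rpow_le_rpow (Real.rpow_nonneg hUnn q) hUq1 (by positivity : (0:ℝ) ≤ 1/q)
      rwa [root U hUnn, Real.one_rpow] at this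
    -- evaluate at s = 2/‖x‖
    have H2 := H (2 / ‖x‖)
    have habs : |2 / ‖x‖| * ‖x‖ = 2 := by
      rw [abs_of_pos (by positivity)]
      field_simp
    rw [habs] at H2
    have hc2 : ‖(2 / ‖x‖) • x + w.fst‖ ≤ 2 + U := by
      rw [hUdef]
      refine (norm_add_le _ _).trans ?_
      rw [norm_smul, Real.norm_eq_abs, habs]
    have hnorm2 : ‖(2 / ‖x‖) • z + w‖ ≤ ((2 + U) ^ q + V ^ q) ^ (1 / q) := by
      rw [hnf, (hcomp _ w).1, (hcomp _ w).2, hVdef]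
      refine Real.rpow_le_rpow (by positivity) ?_ (by positivity)
      exact add_le_add_left (Real.rpow_le_rpow (norm_nonneg _) hc2 hq0.le) _
    have hmain : ((1 - δ) * (2 + 1)) ^ q ≤ (2 + U) ^ q + V ^ q := by
      have h1 : (1 - δ) * (2 + 1) ≤ ((2 + U) ^ q + V ^ q) ^ (1 / q) :=
        le_trans H2 (le_trans (le_refl _) hnorm2)
      have h2 := Real.rpow_le_rpow (by nlinarith) h1 hq0.le
      rwa [one_div, Real.rpow_inv_rpow (by positivity) hq0.ne'] at h2
    -- Bernoulli estimates
    have bern2 : V ^ q ≤ q * (1 - U) := by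
      have hb := one_add_mul_self_le_rpow_one_add (s := U - 1) (by linarith) hq1.le
      have he : (1 : ℝ) + (U - 1) = U := by ring
      rw [he] at hb
      nlinarith
    have bern1 : (2 + U) ^ q + q * (2 : ℝ) ^ (q - 1) * (1 - U) ≤ (3 : ℝ) ^ q := by
      have h2U : (0 : ℝ) < 2 + U := by linarith
      set t : ℝ := (1 - U) / (2 + U) with htdef
      have htnn : 0 ≤ t := div_nonneg (by linarith) h2U.le
      have hb := one_add_mul_self_le_rpow_one_add (s := t) (by linarith) hq1.le
      have hmul : (3 : ℝ) = (2 + U) * (1 + t) := by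
        rw [htdef]; field_simp
        norm_num
      have h3 : (3 : ℝ) ^ q = (2 + U) ^ q * (1 + t) ^ q := by
        rw [hmul, Real.mul_rpow h2U.le (by linarith)]
      have h4 : (2 + U) ^ q * (1 + q * t) ≤ (3 : ℝ) ^ q := by
        rw [h3]
        exact mul_le_mul_of_nonneg_left hb (Real.rpow_nonneg h2U.le q)
      have h5 : (2 + U) ^ q * (q * t) = q * (1 - U) * (2 + U) ^ (q - 1) := by
        rw [htdef, Real.rpow_sub h2U, Real.rpow_one]
        field_simp
      have h6 : (2 : ℝ) ^ (q - 1) ≤ (2 + U) ^ (q - 1) :=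
        Real.rpow_le_rpow (by norm_num) (by linarith) (by linarith)
      have h7 : q * (1 - U) * (2 : ℝ) ^ (q - 1) ≤ q * (1 - U) * (2 + U) ^ (q - 1) :=
        mul_le_mul_of_nonneg_left h6 (by nlinarith)
      nlinarith [h4, h5, h7]
    -- conclude 1 - U ≤ B δ
    have hUb : 1 - U ≤ B δ := by
      have hm : (1 - δ) ^ q * (3 : ℝ) ^ q ≤ (2 + U) ^ q + V ^ q := by
        have : ((1 - δ) * (2 + 1)) ^ q = (1 - δ) ^ q * (3 : ℝ) ^ q := by
          rw [show ((2 : ℝ) + 1) = 3 by norm_num, Real.mul_rpow (by linarith) (by norm_num)]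
        linarith [hmain, this.symm.le, this.le]
      have hchain : (1 - δ) ^ q * (3 : ℝ) ^ q ≤
          (3 : ℝ) ^ q - q * (2 : ℝ) ^ (q - 1) * (1 - U) + q * (1 - U) := by
        nlinarith [bern1, bern2, hm]
      rw [hBdef, le_div_iff₀ hc]
      nlinarith [hchain]
    have hVb : V ≤ (q * B δ) ^ (1 / q) := by
      have h1 : V ^ q ≤ q * B δ :=
        le_trans bern2 (mul_le_mul_of_nonneg_left hUb hq0.le)
      have h2 := Real.rpow_le_rpow (Real.rpow_nonneg hVnn q) h1 (by positivity : (0:ℝ) ≤ 1/q)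
      rwa [root V hVnn] at h2
    have hU0 : 0 < U := by linarith [hrootnn]
    -- final estimate
    have hU0' : 0 < ‖w.fst‖ := by rw [← hUdef]; exact hU0
    have hU1' : ‖w.fst‖ ≤ 1 := by rw [← hUdef]; exact hU1
    have hUb' : 1 - ‖w.fst‖ ≤ B δ := by rw [← hUdef]; exact hUb
    have hVb' : ‖w.snd‖ ≤ (q * B δ) ^ (1 / q) := by rw [← hVdef]; exact hVb
    refine ⟨‖w.fst‖⁻¹ • w.fst, aux_unit_norm hU0', fun s => ?_⟩
    rw [aux_unit_norm hU0']
    have ha0 : 0 ≤ |s| * ‖x‖ := by positivity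
    have Hs := H s
    have htri : ‖s • z + w‖ ≤ ‖s • x + w.fst‖ + ‖w.snd‖ := by
      refine (aux_norm_le_add p X Y (s • z + w)).trans ?_
      rw [(hcomp s w).1, (hcomp s w).2]
    have key := aux_shift hU0' hU1' (s • x)
    have hprod : 0 ≤ (ε - δ) * (|s| * ‖x‖) := mul_nonneg (by linarith) ha0
    generalize hG : ‖s • x + ‖w.fst‖⁻¹ • w.fst‖ = G at key ⊢
    generalize hN : ‖s • z + w‖ = N at Hs htri
    generalize hM : ‖s • x + w.fst‖ = M at key htri
    generalize hvv : ‖w.snd‖ = vv at htri hVb'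
    generalize huu : ‖w.fst‖ = uu at key hUb'
    generalize hR : (q * B δ) ^ (1 / q) = R at hVb' hgδ hrootnn
    generalize hbb : B δ = bb at hUb' hgδ hBnn
    generalize haa : |s| * ‖x‖ = a at Hs hprod ⊢
    linarith [hprod, Hs, htri, key, hUb', hVb', hgδ, hrootnn, hBnn, hδpos]
end
end

section
/- Let X and Y be nontrivial real Banach spaces and let 1 < p < ∞. Then X ⊕_p Y is not octahedral. -/
open Metric Set
open scoped ENNReal

noncomputable section

private lemma aux_strict (q : ℝ) (hq : 1 < q) :
    ((2:ℝ) ^ (1/q) + 1) ^ q + 1 < 2 * 2 ^ q := by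
  have hq0 : (0:ℝ) < q := lt_trans one_pos hq
  set d : ℝ := (2:ℝ) ^ (1/q) with hd
  have hd1 : 1 < d := (Real.one_lt_rpow_iff_of_pos two_pos).2 (Or.inl ⟨one_lt_two, by positivity⟩)
  have hd0 : 0 < d := lt_trans one_pos hd1
  have hdq : d ^ q = 2 := by
    rw [hd, ← Real.rpow_mul (by norm_num : (0:ℝ) ≤ 2), one_div, inv_mul_cancel₀ hq0.ne',
      Real.rpow_one]
  set c : ℝ := d⁻¹ with hc
  have hc0 : 0 < c := inv_pos.2 hd0
  have hc1 : c < 1 := by rw [hc]; exact inv_lt_one_of_one_lt₀ hd1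
  have hcq : c ^ q = 1/2 := by rw [hc, Real.inv_rpow hd0.le, hdq]; norm_num
  have hmid : ((1 + c)/2) ^ q < 3/4 := by
    have h := (strictConvexOn_rpow hq).2 (Set.mem_Ici.2 zero_le_one)
      (Set.mem_Ici.2 hc0.le) hc1.ne' (by norm_num : (0:ℝ) < 1/2)
      (by norm_num : (0:ℝ) < 1/2) (by norm_num)
    simp only [smul_eq_mul] at h
    rw [Real.one_rpow, hcq] at h
    have e : (1/2:ℝ) * 1 + (1/2) * c = (1 + c)/2 := by ring
    rw [e] at h
    linarith
  have h1c : (1 + c) ^ q < 2 ^ q * (3/4) := by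
    have e : (1 + c : ℝ) = 2 * ((1+c)/2) := by ring
    rw [e, Real.mul_rpow (by norm_num) (by positivity)]
    exact mul_lt_mul_of_pos_left hmid (Real.rpow_pos_of_pos two_pos q)
  have hdc : d * c = 1 := mul_inv_cancel₀ hd0.ne'
  have hd1q : (d + 1) ^ q = 2 * (1 + c) ^ q := by
    have e : d + 1 = d * (1 + c) := by rw [mul_add, mul_one, hdc]
    rw [e, Real.mul_rpow hd0.le (by positivity), hdq]
  have h2q : (2:ℝ) < 2 ^ q := by
    calc (2:ℝ) = 2 ^ (1:ℝ) := (Real.rpow_one 2).symm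
    _ < 2 ^ q := Real.rpow_lt_rpow_of_exponent_lt one_lt_two hq
  rw [hd1q]
  linarith

private lemma aux_mink (p : ℝ≥0∞) [Fact (1 ≤ p)] (hq : 0 < p.toReal) (a b : ℝ)
    (ha : 0 ≤ a) (hb : 0 ≤ b) (hab : a ^ p.toReal + b ^ p.toReal = 1) :
    (1 + a) ^ p.toReal + (1 + b) ^ p.toReal ≤ ((2:ℝ) ^ (1/p.toReal) + 1) ^ p.toReal := by
  have hw1 : ‖(WithLp.equiv p (ℝ × ℝ)).symm (1, 1)‖ = 2 ^ (1/p.toReal) := by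
    rw [WithLp.prod_norm_eq_add hq]
    have e1 : ((WithLp.equiv p (ℝ × ℝ)).symm (1, 1)).fst = (1:ℝ) := rfl
    have e2 : ((WithLp.equiv p (ℝ × ℝ)).symm (1, 1)).snd = (1:ℝ) := rfl
    rw [e1, e2, norm_one, Real.one_rpow]
    norm_num
  have hw2 : ‖(WithLp.equiv p (ℝ × ℝ)).symm (a, b)‖ = 1 := by
    rw [WithLp.prod_norm_eq_add hq]
    have e1 : ((WithLp.equiv p (ℝ × ℝ)).symm (a, b)).fst = a := rfl
    have e2 : ((WithLp.equiv p (ℝ × ℝ)).symm (a, b)).snd = b := rfl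
    rw [e1, e2, Real.norm_of_nonneg ha, Real.norm_of_nonneg hb, hab, Real.one_rpow]
  have hw3 : ‖(WithLp.equiv p (ℝ × ℝ)).symm (1, 1) + (WithLp.equiv p (ℝ × ℝ)).symm (a, b)‖
      = ((1+a) ^ p.toReal + (1+b) ^ p.toReal) ^ (1/p.toReal) := by
    rw [WithLp.prod_norm_eq_add hq]
    have e1 : ((WithLp.equiv p (ℝ × ℝ)).symm (1, 1)
        + (WithLp.equiv p (ℝ × ℝ)).symm (a, b)).fst = 1 + a := rfl
    have e2 : ((WithLp.equiv p (ℝ × ℝ)).symm (1, 1)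
        + (WithLp.equiv p (ℝ × ℝ)).symm (a, b)).snd = 1 + b := rfl
    rw [e1, e2, Real.norm_of_nonneg (by linarith), Real.norm_of_nonneg (by linarith)]
  have htri := norm_add_le ((WithLp.equiv p (ℝ × ℝ)).symm (1, 1))
    ((WithLp.equiv p (ℝ × ℝ)).symm (a, b))
  rw [hw1, hw2, hw3] at htri
  have hsum : (0:ℝ) ≤ (1+a) ^ p.toReal + (1+b) ^ p.toReal := by positivity
  calc (1+a) ^ p.toReal + (1+b) ^ p.toReal
      = (((1+a) ^ p.toReal + (1+b) ^ p.toReal) ^ (1/p.toReal)) ^ p.toReal := by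
        rw [one_div, Real.rpow_inv_rpow hsum hq.ne']
  _ ≤ ((2:ℝ) ^ (1/p.toReal) + 1) ^ p.toReal :=
        Real.rpow_le_rpow (by positivity) htri hq.le


theorem stmt_16 (X Y : Type*) [NormedAddCommGroup X] [NormedSpace ℝ X] [CompleteSpace X] [Nontrivial X]
    [NormedAddCommGroup Y] [NormedSpace ℝ Y] [CompleteSpace Y] [Nontrivial Y]
    (p : ℝ≥0∞) [Fact (1 ≤ p)] (hp : 1 < p) (hp' : p ≠ ⊤) :
    ¬ Octahedral (WithLp p (X × Y)) := by
  intro hoct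
  have hq1 : 1 < p.toReal := by
    have := (ENNReal.toReal_lt_toReal ENNReal.one_ne_top hp').2 hp
    simpa using this
  have hq0 : (0:ℝ) < p.toReal := lt_trans one_pos hq1
  obtain ⟨x₀, hx₀⟩ := exists_norm_eq X zero_le_one
  obtain ⟨y₀, hy₀⟩ := exists_norm_eq Y zero_le_one
  set e1 : WithLp p (X × Y) := (WithLp.equiv p (X × Y)).symm (x₀, 0) with he1
  set e2 : WithLp p (X × Y) := (WithLp.equiv p (X × Y)).symm (0, y₀) with he2
  have hne1 : ‖e1‖ = 1 := by rw [he1, WithLp.equiv_symm_apply, WithLp.norm_toLp_fst, hx₀]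
  have hne2 : ‖e2‖ = 1 := by rw [he2, WithLp.equiv_symm_apply, WithLp.norm_toLp_snd, hy₀]
  have hK := aux_strict p.toReal hq1
  -- choose ε by continuity
  have hcont : ContinuousAt (fun ε : ℝ => 2 * (2 - 2*ε) ^ p.toReal) 0 := by
    have h1 : ContinuousAt (fun ε : ℝ => 2 - 2*ε) (0:ℝ) := by fun_prop
    exact continuousAt_const.mul (h1.rpow_const (Or.inl (by norm_num)))
  have hf0 : ((2:ℝ) ^ (1/p.toReal) + 1) ^ p.toReal + 1
      < 2 * (2 - 2*(0:ℝ)) ^ p.toReal := by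
    simp only [mul_zero, sub_zero]
    exact hK
  obtain ⟨δ, hδ0, hδ⟩ := Metric.mem_nhds_iff.1 (hcont (Ioi_mem_nhds hf0))
  set ε : ℝ := min (δ/2) (1/2) with hεdef
  have hε0 : 0 < ε := lt_min (by linarith) (by norm_num)
  have hεhalf : ε ≤ 1/2 := min_le_right _ _
  have hεK : ((2:ℝ) ^ (1/p.toReal) + 1) ^ p.toReal + 1 < 2 * (2 - 2*ε) ^ p.toReal := by
    have hmem : ε ∈ Metric.ball (0:ℝ) δ := by
      rw [Metric.mem_ball, Real.dist_eq, sub_zero, abs_of_pos hε0]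
      calc ε ≤ δ/2 := min_le_left _ _
      _ < δ := by linarith
    exact hδ hmem
  -- apply octahedrality
  have hfd : FiniteDimensional ℝ (Submodule.span ℝ ({e1, e2} : Set (WithLp p (X × Y)))) :=
    FiniteDimensional.span_of_finite ℝ (Set.toFinite _)
  obtain ⟨y, hy1, hy2⟩ := hoct (Submodule.span ℝ ({e1, e2} : Set (WithLp p (X × Y)))) hfd ε hε0
  have hynorm : (‖y.fst‖ ^ p.toReal + ‖y.snd‖ ^ p.toReal) ^ (1/p.toReal) = 1 := by
    rw [← WithLp.prod_norm_eq_add hq0 y]; exact hy1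
  have hab : ‖y.fst‖ ^ p.toReal + ‖y.snd‖ ^ p.toReal = 1 := by
    have hnn : (0:ℝ) ≤ ‖y.fst‖ ^ p.toReal + ‖y.snd‖ ^ p.toReal := by positivity
    calc ‖y.fst‖ ^ p.toReal + ‖y.snd‖ ^ p.toReal
        = ((‖y.fst‖ ^ p.toReal + ‖y.snd‖ ^ p.toReal) ^ (1/p.toReal)) ^ p.toReal := by
          rw [one_div, Real.rpow_inv_rpow hnn hq0.ne']
    _ = 1 := by rw [hynorm, Real.one_rpow]
  have h2ε : (0:ℝ) ≤ 2 - 2*ε := by linarith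
  have hineq1 : (2 - 2*ε) ^ p.toReal ≤ (1 + ‖y.fst‖) ^ p.toReal + ‖y.snd‖ ^ p.toReal := by
    have h1 := hy2 e1 (Submodule.subset_span (Set.mem_insert _ _))
    rw [hne1, hy1] at h1
    have hle : ‖e1 + y‖ ≤ ((1 + ‖y.fst‖) ^ p.toReal + ‖y.snd‖ ^ p.toReal) ^ (1/p.toReal) := by
      rw [WithLp.prod_norm_eq_add hq0]
      apply Real.rpow_le_rpow (by positivity) _ (by positivity)
      have hfst : (e1 + y).fst = x₀ + y.fst := rfl
      have hsnd : (e1 + y).snd = 0 + y.snd := rfl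
      rw [hfst, hsnd, zero_add]
      refine add_le_add (Real.rpow_le_rpow (norm_nonneg _) ?_ hq0.le) le_rfl
      calc ‖x₀ + y.fst‖ ≤ ‖x₀‖ + ‖y.fst‖ := norm_add_le _ _
      _ = 1 + ‖y.fst‖ := by rw [hx₀]
    have h2 : (2 - 2*ε) ≤ ((1 + ‖y.fst‖) ^ p.toReal + ‖y.snd‖ ^ p.toReal) ^ (1/p.toReal) := by
      calc (2 - 2*ε) = (1-ε)*(1+1) := by ring
      _ ≤ ‖e1 + y‖ := h1
      _ ≤ _ := hle
    calc (2 - 2*ε) ^ p.toReal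
        ≤ (((1 + ‖y.fst‖) ^ p.toReal + ‖y.snd‖ ^ p.toReal) ^ (1/p.toReal)) ^ p.toReal :=
          Real.rpow_le_rpow h2ε h2 hq0.le
    _ = _ := by rw [one_div, Real.rpow_inv_rpow (by positivity) hq0.ne']
  have hineq2 : (2 - 2*ε) ^ p.toReal ≤ ‖y.fst‖ ^ p.toReal + (1 + ‖y.snd‖) ^ p.toReal := by
    have h1 := hy2 e2 (Submodule.subset_span (Set.mem_insert_of_mem _ rfl))
    rw [hne2, hy1] at h1
    have hle : ‖e2 + y‖ ≤ (‖y.fst‖ ^ p.toReal + (1 + ‖y.snd‖) ^ p.toReal) ^ (1/p.toReal) := by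
      rw [WithLp.prod_norm_eq_add hq0]
      apply Real.rpow_le_rpow (by positivity) _ (by positivity)
      have hfst : (e2 + y).fst = 0 + y.fst := rfl
      have hsnd : (e2 + y).snd = y₀ + y.snd := rfl
      rw [hfst, hsnd, zero_add]
      refine add_le_add le_rfl (Real.rpow_le_rpow (norm_nonneg _) ?_ hq0.le)
      calc ‖y₀ + y.snd‖ ≤ ‖y₀‖ + ‖y.snd‖ := norm_add_le _ _
      _ = 1 + ‖y.snd‖ := by rw [hy₀]
    have h2 : (2 - 2*ε) ≤ (‖y.fst‖ ^ p.toReal + (1 + ‖y.snd‖) ^ p.toReal) ^ (1/p.toReal) := by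
      calc (2 - 2*ε) = (1-ε)*(1+1) := by ring
      _ ≤ ‖e2 + y‖ := h1
      _ ≤ _ := hle
    calc (2 - 2*ε) ^ p.toReal
        ≤ ((‖y.fst‖ ^ p.toReal + (1 + ‖y.snd‖) ^ p.toReal) ^ (1/p.toReal)) ^ p.toReal :=
          Real.rpow_le_rpow h2ε h2 hq0.le
    _ = _ := by rw [one_div, Real.rpow_inv_rpow (by positivity) hq0.ne']
  have hmink := aux_mink p hq0 ‖y.fst‖ ‖y.snd‖ (norm_nonneg _) (norm_nonneg _) hab
  linarith
end
end

section
/- Let X and Y be nontrivial real Banach spaces. (a) If X is octahedral, then X ⊕₁ Y is octahedral. (b) If X and Y are both octahedral, then X ⊕_∞ Y is octahedral. (c) If X ⊕_∞ Y is octahedral, then X is octahedral. -/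
open Metric Set

noncomputable section

set_option maxHeartbeats 1000000

private lemma norm_L1_prod' {α β : Type*} [SeminormedAddCommGroup α] [SeminormedAddCommGroup β]
    (f : WithLp 1 (α × β)) : ‖f‖ = ‖f.fst‖ + ‖f.snd‖ := by
  rw [WithLp.prod_norm_eq_of_nat 1 (by norm_num)]
  simp

private lemma exists_unit'17 {X : Type*} [NormedAddCommGroup X] [NormedSpace ℝ X] [Nontrivial X] :
    ∃ e : X, ‖e‖ = 1 := by
  obtain ⟨x₀, hx₀⟩ := exists_ne (0 : X)
  have : ‖x₀‖ ≠ 0 := norm_ne_zero_iff.mpr hx₀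
  refine ⟨‖x₀‖⁻¹ • x₀, by rw [norm_smul, norm_inv, norm_norm]; field_simp⟩

theorem stmt_17 (X Y : Type*) [NormedAddCommGroup X] [NormedSpace ℝ X] [CompleteSpace X] [Nontrivial X]
    [NormedAddCommGroup Y] [NormedSpace ℝ Y] [CompleteSpace Y] [Nontrivial Y] :
    (Octahedral X → Octahedral (WithLp 1 (X × Y))) ∧
    (Octahedral X → Octahedral Y → Octahedral (WithLp ⊤ (X × Y))) ∧
    (Octahedral (WithLp ⊤ (X × Y)) → Octahedral X) := by
  refine ⟨?_, ?_, ?_⟩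
  · -- (a)
    intro hX E hE ε hε
    set L := (LinearMap.fst ℝ X Y).comp (WithLp.linearEquiv 1 ℝ (X × Y)).toLinearMap with hL
    haveI : FiniteDimensional ℝ (E.map L) := Module.Finite.map _ _
    obtain ⟨y, hy, hy2⟩ := hX (E.map L) inferInstance ε hε
    refine ⟨(WithLp.equiv 1 (X × Y)).symm (y, 0), ?_, ?_⟩
    · rw [norm_L1_prod']
      simp [hy]
    intro w hw
    have h1 := hy2 w.fst ⟨w, hw, rfl⟩
    rw [norm_L1_prod', norm_L1_prod', norm_L1_prod']
    simp only [WithLp.add_fst, WithLp.add_snd, WithLp.equiv_symm_apply, WithLp.toLp_fst, WithLp.toLp_snd,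
      add_zero, norm_zero]
    rw [hy] at h1 ⊢
    nlinarith [norm_nonneg w.snd]
  · -- (b)
    intro hX hY E hE ε hε
    set L1 := (LinearMap.fst ℝ X Y).comp (WithLp.linearEquiv ⊤ ℝ (X × Y)).toLinearMap with hL1
    set L2 := (LinearMap.snd ℝ X Y).comp (WithLp.linearEquiv ⊤ ℝ (X × Y)).toLinearMap with hL2
    haveI : FiniteDimensional ℝ (E.map L1) := Module.Finite.map _ _
    haveI : FiniteDimensional ℝ (E.map L2) := Module.Finite.map _ _
    obtain ⟨y₁, hy₁, hy₁2⟩ := hX (E.map L1) inferInstance ε hε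
    obtain ⟨y₂, hy₂, hy₂2⟩ := hY (E.map L2) inferInstance ε hε
    refine ⟨(WithLp.equiv ⊤ (X × Y)).symm (y₁, y₂), ?_, ?_⟩
    · rw [WithLp.prod_norm_eq_sup]
      simp [hy₁, hy₂]
    intro w hw
    have h1 := hy₁2 w.fst ⟨w, hw, rfl⟩
    have h2 := hy₂2 w.snd ⟨w, hw, rfl⟩
    rw [WithLp.prod_norm_eq_sup, WithLp.prod_norm_eq_sup, WithLp.prod_norm_eq_sup]
    simp only [WithLp.add_fst, WithLp.add_snd, WithLp.equiv_symm_apply, WithLp.toLp_fst, WithLp.toLp_snd]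
    rw [hy₁, hy₂] at *
    rcases le_or_gt (1 - ε) 0 with h | h
    · have : (1-ε) * ((‖w.fst‖ ⊔ ‖w.snd‖) + (1 ⊔ 1)) ≤ 0 := by
        apply mul_nonpos_of_nonpos_of_nonneg h
        positivity
      exact this.trans (le_max_iff.2 (Or.inl (norm_nonneg _)))
    · rcases le_total ‖w.fst‖ ‖w.snd‖ with hc | hc
      · refine le_trans ?_ (le_max_right ‖w.fst + y₁‖ ‖w.snd + y₂‖)
        calc (1-ε) * ((‖w.fst‖ ⊔ ‖w.snd‖) + (1 ⊔ 1)) = (1-ε) * (‖w.snd‖ + 1) := by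
              rw [max_eq_right hc, max_self]
          _ ≤ ‖w.snd + y₂‖ := h2
      · refine le_trans ?_ (le_max_left ‖w.fst + y₁‖ ‖w.snd + y₂‖)
        calc (1-ε) * ((‖w.fst‖ ⊔ ‖w.snd‖) + (1 ⊔ 1)) = (1-ε) * (‖w.fst‖ + 1) := by
              rw [max_eq_left hc, max_self]
          _ ≤ ‖w.fst + y₁‖ := h1
  · -- (c)
    intro hZ E hE ε hε
    obtain ⟨e, he⟩ := exists_unit'17 (X := X)
    rcases le_or_gt 1 ε with hε1 | hε1
    · refine ⟨e, he, fun x hx => ?_⟩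
      have h1 : (1 - ε) * (‖x‖ + ‖e‖) ≤ 0 := by
        apply mul_nonpos_of_nonpos_of_nonneg (by linarith)
        positivity
      exact h1.trans (norm_nonneg _)
    set δ := ε / 4 with hδ
    have hδ0 : 0 < δ := by positivity
    set L : X →ₗ[ℝ] WithLp ⊤ (X × Y) :=
      (WithLp.linearEquiv ⊤ ℝ (X × Y)).symm.toLinearMap.comp (LinearMap.inl ℝ X Y) with hL
    have hLnorm : ∀ x : X, ‖L x‖ = ‖x‖ := by
      intro x
      rw [WithLp.prod_norm_eq_sup]
      have h1 : (L x).fst = x := rfl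
      have h2 : (L x).snd = 0 := rfl
      rw [h1, h2, norm_zero, max_eq_left (norm_nonneg x)]
    set E' := (E ⊔ (ℝ ∙ e)).map L with hE'
    haveI : FiniteDimensional ℝ E' := Module.Finite.map _ _
    obtain ⟨z, hz, hz2⟩ := hZ E' inferInstance δ hδ0
    have hz1le : ‖z.fst‖ ≤ 1 := by
      rw [WithLp.prod_norm_eq_sup] at hz
      exact le_of_le_of_eq (le_max_left _ _) hz
    have hz2le : ‖z.snd‖ ≤ 1 := by
      rw [WithLp.prod_norm_eq_sup] at hz
      exact le_of_le_of_eq (le_max_right _ _) hz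
    have key : ∀ x : X, x ∈ E ⊔ (ℝ ∙ e) → (1 - δ) * (‖x‖ + 1) ≤ max ‖x + z.fst‖ ‖z.snd‖ := by
      intro x hx
      have h := hz2 (L x) ⟨x, hx, rfl⟩
      rw [hLnorm, hz] at h
      have hfst : (L x + z).fst = x + z.fst := rfl
      have hsnd : (L x + z).snd = z.snd := by
        show (0 : Y) + z.snd = z.snd
        rw [zero_add]
      rw [WithLp.prod_norm_eq_sup, hfst, hsnd] at h
      exact h
    have hy1lb : 1 - 2*δ ≤ ‖z.fst‖ := by
      have h := key e (Submodule.mem_sup_right (Submodule.mem_span_singleton_self e))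
      rw [he] at h
      have h2 : (1 - δ) * (1 + 1) ≤ ‖e + z.fst‖ := by
        rcases max_cases ‖e + z.fst‖ ‖z.snd‖ with ⟨heq, _⟩ | ⟨heq, _⟩
        · rwa [heq] at h
        · rw [heq] at h; nlinarith
      have h3 : ‖e + z.fst‖ ≤ 1 + ‖z.fst‖ := by
        calc ‖e + z.fst‖ ≤ ‖e‖ + ‖z.fst‖ := norm_add_le _ _
          _ = 1 + ‖z.fst‖ := by rw [he]
      nlinarith
    set a := ‖z.fst‖ with ha
    have ha0 : 0 < a := by nlinarith
    refine ⟨a⁻¹ • z.fst, ?_, ?_⟩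
    · rw [norm_smul, norm_inv, Real.norm_eq_abs, abs_of_pos ha0, ← ha]
      field_simp
    set y := a⁻¹ • z.fst with hy
    have hydiff : ‖y - z.fst‖ ≤ 2*δ := by
      have hinv : 1 ≤ a⁻¹ := by
        have hma : a * a⁻¹ = 1 := mul_inv_cancel₀ ha0.ne'
        nlinarith [hz1le]
      have heq : y - z.fst = (a⁻¹ - 1) • z.fst := by
        rw [sub_smul, one_smul, hy]
      rw [heq, norm_smul, Real.norm_eq_abs, abs_of_nonneg (by linarith), ← ha]
      have hma : a⁻¹ * a = 1 := inv_mul_cancel₀ ha0.ne'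
      nlinarith [hy1lb]
    intro x hx
    have hεδ : ε = 4 * δ := by rw [hδ]; ring
    have h := key x (Submodule.mem_sup_left hx)
    have htri : ‖x + z.fst‖ ≤ ‖x + y‖ + ‖y - z.fst‖ := by
      have h2 := norm_add_le (x + y) (z.fst - y)
      have h3 : x + y + (z.fst - y) = x + z.fst := by abel
      rw [h3] at h2
      rw [norm_sub_rev z.fst y] at h2
      exact h2
    rcases le_or_gt ((1 - δ) * (‖x‖ + 1)) 1 with hc | hc
    · have hxs : ‖x‖ ≤ δ * (1 + ‖x‖) := by nlinarith [norm_nonneg x]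
      have hlb : 1 - ‖x‖ ≤ ‖x + y‖ := by
        have h2 := norm_add_le (x + y) (-x)
        have h3 : x + y + -x = y := by abel
        rw [h3, norm_neg] at h2
        have hy1 : ‖y‖ = 1 := by
          rw [hy, norm_smul, norm_inv, Real.norm_eq_abs, abs_of_pos ha0, ← ha]
          field_simp
        rw [hy1] at h2
        linarith
      have hy1 : ‖y‖ = 1 := by
        rw [hy, norm_smul, norm_inv, Real.norm_eq_abs, abs_of_pos ha0, ← ha]
        field_simp
      rw [hy1, hεδ]
      linarith [mul_nonneg hδ0.le (norm_nonneg x), norm_nonneg x, hxs, hlb]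
    · have hA : (1 - δ) * (‖x‖ + 1) ≤ ‖x + z.fst‖ := by
        rcases max_cases ‖x + z.fst‖ ‖z.snd‖ with ⟨heq, _⟩ | ⟨heq, _⟩
        · rwa [heq] at h
        · rw [heq] at h; linarith
      have hy1 : ‖y‖ = 1 := by
        rw [hy, norm_smul, norm_inv, Real.norm_eq_abs, abs_of_pos ha0, ← ha]
        field_simp
      rw [hy1, hεδ]
      linarith [mul_nonneg hδ0.le (norm_nonneg x), norm_nonneg x, hA, htri, hydiff]
end
end

section
/- Let X be a nontrivial real Banach space and let Y be a proper closed subspace of X that is a strict M-ideal in X. Then both Y and X have the strong diameter 2 property. -/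
open Metric Set

noncomputable section

private lemma comb_norm_le {E : Type*} [NormedAddCommGroup E] [NormedSpace ℝ E]
    {n : ℕ} {lam : Fin n → ℝ} {g : Fin n → E}
    (hlam : ∀ i, 0 ≤ lam i) (hsum : ∑ i, lam i = 1) (hg : ∀ i, ‖g i‖ ≤ 1) :
    ‖∑ i, lam i • g i‖ ≤ 1 := by
  calc ‖∑ i, lam i • g i‖ ≤ ∑ i, ‖lam i • g i‖ := norm_sum_le _ _
    _ = ∑ i, lam i * ‖g i‖ := by
        apply Finset.sum_congr rfl
        intro i _
        rw [norm_smul, Real.norm_eq_abs, abs_of_nonneg (hlam i)]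
    _ ≤ ∑ i, lam i := by
        apply Finset.sum_le_sum
        intro i _
        nlinarith [hg i, hlam i, norm_nonneg (g i)]
    _ = 1 := hsum

private lemma sum_apply_sub {E : Type*} [NormedAddCommGroup E] [NormedSpace ℝ E]
    (χ : E →L[ℝ] ℝ) {n : ℕ} (lam : Fin n → ℝ) (vp vm : Fin n → E) :
    χ ((∑ i, lam i • vp i) - ∑ i, lam i • vm i) = ∑ i, lam i * (χ (vp i) - χ (vm i)) := by
  rw [map_sub, map_sum, map_sum, ← Finset.sum_sub_distrib]
  apply Finset.sum_congr rfl
  intro i _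
  rw [map_smul, map_smul, smul_eq_mul, smul_eq_mul]
  ring


private lemma exists_unit_ball {X : Type*} [NormedAddCommGroup X] [NormedSpace ℝ X]
    (χ : X →L[ℝ] ℝ) {r : ℝ} (hr : r < ‖χ‖) : ∃ x : X, ‖x‖ ≤ 1 ∧ r < χ x := by
  obtain ⟨x, hx, hrx⟩ := χ.exists_lt_apply_of_lt_opNorm hr
  rcases le_or_gt 0 (χ x) with h | h
  · exact ⟨x, hx.le, by rwa [Real.norm_eq_abs, abs_of_nonneg h] at hrx⟩
  · refine ⟨-x, by simpa using hx.le, ?_⟩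
    rw [map_neg]
    rwa [Real.norm_eq_abs, abs_of_neg h] at hrx

private lemma appr₂ {X : Type*} [NormedAddCommGroup X] [NormedSpace ℝ X]
    {s : Set X} (hs : Convex ℝ s)
    (f₁ f₂ : X →L[ℝ] ℝ) (r₁ r₂ : ℝ)
    (H : ∀ c₁ c₂ : ℝ, ∀ δ : ℝ, 0 < δ → ∃ x ∈ s, c₁ * r₁ + c₂ * r₂ < c₁ * f₁ x + c₂ * f₂ x + δ)
    {δ : ℝ} (hδ : 0 < δ) :
    ∃ x ∈ s, |f₁ x - r₁| < δ ∧ |f₂ x - r₂| < δ := by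
  set T : X →L[ℝ] ℝ × ℝ := f₁.prod f₂ with hT
  have himg : Convex ℝ (⇑T '' s) := by
    have := hs.linear_image (T : X →ₗ[ℝ] ℝ × ℝ)
    simpa using this
  have hK : (r₁, r₂) ∈ closure (⇑T '' s) := by
    by_contra hmem
    obtain ⟨f, u, hfu, huf⟩ :=
      geometric_hahn_banach_closed_point himg.closure isClosed_closure hmem
    have hlin : ∀ p : ℝ × ℝ, f p = p.1 * f (1, 0) + p.2 * f (0, 1) := by
      intro p
      have hp : p = p.1 • ((1 : ℝ), (0 : ℝ)) + p.2 • ((0 : ℝ), (1 : ℝ)) := by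
        ext <;> simp
      calc f p = f (p.1 • ((1 : ℝ), (0 : ℝ)) + p.2 • ((0 : ℝ), (1 : ℝ))) := by rw [← hp]
        _ = p.1 * f (1, 0) + p.2 * f (0, 1) := by
            rw [map_add, map_smul, map_smul, smul_eq_mul, smul_eq_mul]
    set c₁ := f (1, 0)
    set c₂ := f (0, 1)
    have huf' : u < c₁ * r₁ + c₂ * r₂ := by rw [hlin (r₁, r₂)] at huf; linarith
    obtain ⟨x, hxs, hx⟩ := H c₁ c₂ (c₁ * r₁ + c₂ * r₂ - u) (by linarith)
    have hTx : f (T x) < u := hfu _ (subset_closure (mem_image_of_mem _ hxs))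
    have hTx' : f (T x) = c₁ * f₁ x + c₂ * f₂ x := by
      rw [hlin (T x)]
      have : T x = (f₁ x, f₂ x) := rfl
      rw [this]
      ring
    linarith
  obtain ⟨b, hb, hdist⟩ := Metric.mem_closure_iff.mp hK δ hδ
  obtain ⟨x, hxs, rfl⟩ := hb
  have h1 : dist r₁ (f₁ x) < δ := lt_of_le_of_lt (le_max_left _ _) (by
    rw [Prod.dist_eq] at hdist; exact hdist)
  have h2 : dist r₂ (f₂ x) < δ := lt_of_le_of_lt (le_max_right _ _) (by
    rw [Prod.dist_eq] at hdist; exact hdist)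
  refine ⟨x, hxs, ?_, ?_⟩
  · rw [abs_sub_comm, ← Real.dist_eq]; exact h1
  · rw [abs_sub_comm, ← Real.dist_eq]; exact h2

private lemma exists_annihilator {X : Type*} [NormedAddCommGroup X] [NormedSpace ℝ X]
    (Y : Subspace ℝ X) (hYc : IsClosed (Y : Set X)) (hproper : Y ≠ ⊤) :
    ∃ ϕ : X →L[ℝ] ℝ, ‖ϕ‖ = 1 ∧ ∀ y ∈ Y, ϕ y = 0 := by
  have hx₀ : ∃ x₀ : X, x₀ ∉ Y := by
    by_contra h
    push_neg at h
    exact hproper (Submodule.eq_top_iff'.mpr h)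
  obtain ⟨x₀, hx₀⟩ := hx₀
  obtain ⟨f, u, hfu, huf⟩ := geometric_hahn_banach_closed_point Y.convex hYc hx₀
  have hY0 : ∀ y ∈ Y, f y = 0 := by
    intro y hy
    by_contra h0
    have h1 := hfu (((|u| + 1) / f y) • y) (Y.smul_mem _ hy)
    rw [map_smul, smul_eq_mul, div_mul_cancel₀ _ h0] at h1
    have := le_abs_self u
    linarith
  have hu0 : 0 < u := by
    have := hfu 0 Y.zero_mem
    simpa using this
  have hf0 : f ≠ 0 := by
    intro h
    rw [h] at huf
    simp at huf
    linarith
  refine ⟨‖f‖⁻¹ • f, ?_, ?_⟩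
  · have hns := norm_smul (‖f‖⁻¹) f
    rw [hns]
    simp [inv_mul_cancel₀ (norm_ne_zero_iff.mpr hf0)]
  · intro y hy
    rw [ContinuousLinearMap.smul_apply, hY0 y hy, smul_zero]

private lemma apply_le_norm {X : Type*} [NormedAddCommGroup X] [NormedSpace ℝ X]
    (g : X →L[ℝ] ℝ) (z : X) (hz : ‖z‖ ≤ 1) : g z ≤ ‖g‖ := by
  have h := g.le_opNorm z
  have h' : ‖g‖ * ‖z‖ ≤ ‖g‖ := mul_le_of_le_one_right (norm_nonneg g) hz
  calc g z ≤ |g z| := le_abs_self _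
    _ = ‖g z‖ := (Real.norm_eq_abs _).symm
    _ ≤ ‖g‖ := h.trans h'


section MIdealHelpers

variable {X : Type*} [NormedAddCommGroup X] [NormedSpace ℝ X]
  {Y : Subspace ℝ X} {P : StrongDual ℝ X →L[ℝ] StrongDual ℝ X}

private lemma norm_restrict
    (hker : ∀ f : StrongDual ℝ X, P f = 0 ↔ ∀ y ∈ Y, f y = 0)
    (hM : ∀ f : StrongDual ℝ X, ‖f‖ = ‖P f‖ + ‖f - P f‖)
    {g : X →L[ℝ] ℝ} (hg : P g = g) :
    ‖g.comp Y.subtypeL‖ = ‖g‖ := by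
  apply le_antisymm
  · apply ContinuousLinearMap.opNorm_le_bound _ (norm_nonneg g)
    intro y
    calc ‖(g.comp Y.subtypeL) y‖ = ‖g (y : X)‖ := rfl
      _ ≤ ‖g‖ * ‖(y : X)‖ := g.le_opNorm _
      _ = ‖g‖ * ‖y‖ := rfl
  · obtain ⟨F, hFext, hFnorm⟩ := exists_extension_norm_eq Y (g.comp Y.subtypeL)
    have h0 : P (F - g) = 0 := by
      rw [hker]
      intro y hy
      have := hFext ⟨y, hy⟩
      simp only [ContinuousLinearMap.sub_apply]
      rw [this]
      simp [ContinuousLinearMap.comp_apply]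
    have hPF : P F = g := by
      have := map_sub P F g
      rw [h0, hg] at this
      linear_combination (norm := module) -this
    have hMF := hM F
    rw [hPF, hFnorm] at hMF
    have := norm_nonneg (F - g)
    linarith


private lemma exists_in_Y
    (hker : ∀ f : StrongDual ℝ X, P f = 0 ↔ ∀ y ∈ Y, f y = 0)
    (hM : ∀ f : StrongDual ℝ X, ‖f‖ = ‖P f‖ + ‖f - P f‖)
    {g : X →L[ℝ] ℝ} (hg : P g = g) {r : ℝ} (hr : r < ‖g‖) :
    ∃ y, y ∈ Y ∧ ‖y‖ ≤ 1 ∧ r < g y := by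
  rw [← norm_restrict hker hM hg] at hr
  obtain ⟨p, hp, hrp⟩ := (g.comp Y.subtypeL).exists_lt_apply_of_lt_opNorm hr
  have hval : (g.comp Y.subtypeL) p = g (p : X) := rfl
  rcases le_or_gt 0 (g (p : X)) with h | h
  · exact ⟨(p : X), p.2, hp.le, by rwa [hval, Real.norm_eq_abs, abs_of_nonneg h] at hrp⟩
  · refine ⟨-(p : X), Y.neg_mem p.2, by simpa using hp.le, ?_⟩
    rw [map_neg]
    rwa [hval, Real.norm_eq_abs, abs_of_neg h] at hrp


private lemma exists_norming
    (hproj : ∀ f, P (P f) = P f)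
    (hnorming : ∀ x : X,
      ‖x‖ = sSup {r : ℝ | ∃ f ∈ Set.range P, ‖f‖ ≤ 1 ∧ r = |f x|})
    (v : X) {r : ℝ} (hr : r < ‖v‖) :
    ∃ Ψ : X →L[ℝ] ℝ, P Ψ = Ψ ∧ ‖Ψ‖ ≤ 1 ∧ r < Ψ v := by
  have h := hnorming v
  have hne : (0 : ℝ) ∈ {r : ℝ | ∃ f ∈ Set.range P, ‖f‖ ≤ 1 ∧ r = |f v|} := by
    refine ⟨0, ⟨0, map_zero P⟩, by simp, by simp⟩
  rw [h] at hr
  obtain ⟨a, haS, hra⟩ := exists_lt_of_lt_csSup ⟨0, hne⟩ hr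
  obtain ⟨f, ⟨F, hPF⟩, hf1, rfl⟩ := haS
  have hPf : P f = f := by rw [← hPF, hproj]
  rcases le_or_gt 0 (f v) with h' | h'
  · exact ⟨f, hPf, hf1, by rwa [abs_of_nonneg h'] at hra⟩
  · refine ⟨-f, by rw [map_neg, hPf], by rwa [norm_neg], ?_⟩
    rw [ContinuousLinearMap.neg_apply]
    rwa [abs_of_neg h'] at hra


private lemma approxY
    (hker : ∀ f : StrongDual ℝ X, P f = 0 ↔ ∀ y ∈ Y, f y = 0)
    (hM : ∀ f : StrongDual ℝ X, ‖f‖ = ‖P f‖ + ‖f - P f‖)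
    {χ₁ χ₂ : X →L[ℝ] ℝ} (h₁ : P χ₁ = χ₁) (h₂ : P χ₂ = χ₂)
    {u : X} (hu : ‖u‖ ≤ 1) {δ : ℝ} (hδ : 0 < δ) :
    ∃ y, y ∈ Y ∧ ‖y‖ ≤ 1 ∧ |χ₁ y - χ₁ u| < δ ∧ |χ₂ y - χ₂ u| < δ := by
  have hs : Convex ℝ ((Y : Set X) ∩ Metric.closedBall 0 1) :=
    Y.convex.inter (convex_closedBall 0 1)
  have H : ∀ c₁ c₂ : ℝ, ∀ δ' : ℝ, 0 < δ' → ∃ x ∈ (Y : Set X) ∩ Metric.closedBall 0 1,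
      c₁ * χ₁ u + c₂ * χ₂ u < c₁ * χ₁ x + c₂ * χ₂ x + δ' := by
    intro c₁ c₂ δ' hδ'
    set χ := c₁ • χ₁ + c₂ • χ₂ with hχdef
    have hχ : P χ = χ := by rw [hχdef, map_add, map_smul, map_smul, h₁, h₂]
    have happ : ∀ x : X, χ x = c₁ * χ₁ x + c₂ * χ₂ x := by
      intro x
      simp [hχdef, smul_eq_mul]
    have hle : χ u - δ' < ‖χ‖ := by
      have := apply_le_norm χ u hu
      linarith
    obtain ⟨y, hyY, hy1, hy⟩ := exists_in_Y hker hM hχ hle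
    refine ⟨y, ⟨hyY, mem_closedBall_zero_iff.mpr hy1⟩, ?_⟩
    rw [← happ, ← happ]
    linarith
  obtain ⟨y, hy, h1, h2⟩ := appr₂ hs χ₁ χ₂ (χ₁ u) (χ₂ u) H hδ
  exact ⟨y, hy.1, mem_closedBall_zero_iff.mp hy.2, h1, h2⟩


private lemma approxX
    (hM : ∀ f : StrongDual ℝ X, ‖f‖ = ‖P f‖ + ‖f - P f‖)
    (F₁ F₂ : X →L[ℝ] ℝ) {y u : X} (hy : ‖y‖ ≤ 1) (hu : ‖u‖ ≤ 1) {δ : ℝ} (hδ : 0 < δ) :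
    ∃ a : X, ‖a‖ ≤ 1 ∧ |F₁ a - ((P F₁) y + (F₁ - P F₁) u)| < δ
      ∧ |F₂ a - ((P F₂) y + (F₂ - P F₂) u)| < δ := by
  have hs : Convex ℝ (Metric.closedBall (0 : X) 1) := convex_closedBall 0 1
  set r₁ := (P F₁) y + (F₁ - P F₁) u with hr₁
  set r₂ := (P F₂) y + (F₂ - P F₂) u with hr₂
  have H : ∀ c₁ c₂ : ℝ, ∀ δ' : ℝ, 0 < δ' → ∃ x ∈ Metric.closedBall (0 : X) 1,
      c₁ * r₁ + c₂ * r₂ < c₁ * F₁ x + c₂ * F₂ x + δ' := by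
    intro c₁ c₂ δ' hδ'
    set χ := c₁ • F₁ + c₂ • F₂ with hχdef
    have hval : c₁ * r₁ + c₂ * r₂ = (P χ) y + (χ - P χ) u := by
      simp only [hr₁, hr₂, hχdef, map_add, map_smul, ContinuousLinearMap.add_apply,
        ContinuousLinearMap.smul_apply, ContinuousLinearMap.sub_apply, smul_eq_mul]
      ring
    have hbound : (P χ) y + (χ - P χ) u ≤ ‖χ‖ := by
      have h1 := apply_le_norm (P χ) y hy
      have h2 := apply_le_norm (χ - P χ) u hu
      rw [hM χ]
      linarith
    have hlt : c₁ * r₁ + c₂ * r₂ - δ' < ‖χ‖ := by rw [hval]; linarith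
    obtain ⟨x, hx1, hx⟩ := exists_unit_ball χ hlt
    have happ : χ x = c₁ * F₁ x + c₂ * F₂ x := by
      simp [hχdef, smul_eq_mul]
    refine ⟨x, mem_closedBall_zero_iff.mpr hx1, ?_⟩
    rw [← happ]
    linarith
  obtain ⟨a, ha, h1, h2⟩ := appr₂ hs F₁ F₂ r₁ r₂ H hδ
  exact ⟨a, mem_closedBall_zero_iff.mp ha, h1, h2⟩


private lemma core
    (hproj : ∀ f, P (P f) = P f)
    (hker : ∀ f : StrongDual ℝ X, P f = 0 ↔ ∀ y ∈ Y, f y = 0)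
    (hM : ∀ f : StrongDual ℝ X, ‖f‖ = ‖P f‖ + ‖f - P f‖)
    (hnorming : ∀ x : X,
      ‖x‖ = sSup {r : ℝ | ∃ f ∈ Set.range P, ‖f‖ ≤ 1 ∧ r = |f x|})
    (hYc : IsClosed (Y : Set X)) (hproper : Y ≠ ⊤)
    {n : ℕ} {lam : Fin n → ℝ} {G : Fin n → X →L[ℝ] ℝ}
    (hlam : ∀ i, 0 ≤ lam i) (hsum : ∑ i, lam i = 1)
    (hG : ∀ i, P (G i) = G i) {δ : ℝ} (hδ : 0 < δ) :
    ∃ (yp ym : Fin n → X) (Ψ : X →L[ℝ] ℝ), P Ψ = Ψ ∧ ‖Ψ‖ ≤ 1 ∧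
      (∀ i, yp i ∈ Y ∧ ‖yp i‖ ≤ 1 ∧ ‖G i‖ - δ < G i (yp i)) ∧
      (∀ i, ym i ∈ Y ∧ ‖ym i‖ ≤ 1 ∧ ‖G i‖ - δ < G i (ym i)) ∧
      2 - δ < ∑ i, lam i * (Ψ (yp i) - Ψ (ym i)) := by
  obtain ⟨ϕ, hϕ1, hϕY⟩ := exists_annihilator Y hYc hproper
  have hϕ0 : P ϕ = 0 := (hker ϕ).mpr hϕY
  have hplus : ∀ i, ‖G i + ϕ‖ = ‖G i‖ + 1 := by
    intro i
    have h1 : P (G i + ϕ) = G i := by rw [map_add, hG i, hϕ0, add_zero]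
    rw [hM (G i + ϕ), h1, add_sub_cancel_left, hϕ1]
  have hminus : ∀ i, ‖G i - ϕ‖ = ‖G i‖ + 1 := by
    intro i
    have h1 : P (G i - ϕ) = G i := by rw [map_sub, hG i, hϕ0, sub_zero]
    rw [hM (G i - ϕ), h1, sub_sub_cancel_left, norm_neg, hϕ1]
  set ε8 := δ / 8 with hε8
  have hε8pos : 0 < ε8 := by positivity
  have Hvp : ∀ i, ∃ v : X, ‖v‖ ≤ 1 ∧ ‖G i‖ + 1 - ε8 < (G i + ϕ) v := fun i =>
    exists_unit_ball _ (by rw [hplus i]; linarith)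
  choose vp hvp1 hvp2 using Hvp
  have Hvm : ∀ i, ∃ v : X, ‖v‖ ≤ 1 ∧ ‖G i‖ + 1 - ε8 < (G i - ϕ) v := fun i =>
    exists_unit_ball _ (by rw [hminus i]; linarith)
  choose vm hvm1 hvm2 using Hvm
  have hGvp : ∀ i, ‖G i‖ - ε8 < G i (vp i) := by
    intro i
    have h := hvp2 i
    rw [ContinuousLinearMap.add_apply] at h
    have h2 := apply_le_norm ϕ (vp i) (hvp1 i)
    rw [hϕ1] at h2
    linarith
  have hϕvp : ∀ i, 1 - ε8 < ϕ (vp i) := by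
    intro i
    have h := hvp2 i
    rw [ContinuousLinearMap.add_apply] at h
    have h2 := apply_le_norm (G i) (vp i) (hvp1 i)
    linarith
  have hGvm : ∀ i, ‖G i‖ - ε8 < G i (vm i) := by
    intro i
    have h := hvm2 i
    rw [ContinuousLinearMap.sub_apply] at h
    have h2 := apply_le_norm (-ϕ) (vm i) (hvm1 i)
    rw [norm_neg, hϕ1] at h2
    rw [ContinuousLinearMap.neg_apply] at h2
    linarith
  have hϕvm : ∀ i, ϕ (vm i) < -(1 - ε8) := by
    intro i
    have h := hvm2 i
    rw [ContinuousLinearMap.sub_apply] at h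
    have h2 := apply_le_norm (G i) (vm i) (hvm1 i)
    linarith
  set w := (∑ i, lam i • vp i) - ∑ i, lam i • vm i with hw
  have happly : ∀ χ : X →L[ℝ] ℝ, χ w = ∑ i, lam i * (χ (vp i) - χ (vm i)) := by
    intro χ
    rw [hw, map_sub, map_sum, map_sum, ← Finset.sum_sub_distrib]
    apply Finset.sum_congr rfl
    intro i _
    rw [map_smul, map_smul, smul_eq_mul, smul_eq_mul]
    ring
  have hϕw2 : 2 - 2 * ε8 ≤ ϕ w := by
    rw [happly ϕ]
    calc 2 - 2 * ε8 = ∑ i, lam i * (2 - 2 * ε8) := by rw [← Finset.sum_mul, hsum, one_mul]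
      _ ≤ ∑ i, lam i * (ϕ (vp i) - ϕ (vm i)) := by
          apply Finset.sum_le_sum
          intro i _
          exact mul_le_mul_of_nonneg_left (by linarith [hϕvp i, hϕvm i]) (hlam i)
  have hwnorm : 2 - 4 * ε8 < ‖w‖ := by
    have hle : ϕ w ≤ ‖w‖ := by
      calc ϕ w ≤ |ϕ w| := le_abs_self _
        _ = ‖ϕ w‖ := (Real.norm_eq_abs _).symm
        _ ≤ ‖ϕ‖ * ‖w‖ := ϕ.le_opNorm w
        _ = ‖w‖ := by rw [hϕ1, one_mul]
    linarith
  obtain ⟨Ψ, hPΨ, hΨ1, hΨw⟩ := exists_norming hproj hnorming w hwnorm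
  have Hyp : ∀ i, ∃ y, y ∈ Y ∧ ‖y‖ ≤ 1 ∧ |G i y - G i (vp i)| < ε8 ∧ |Ψ y - Ψ (vp i)| < ε8 :=
    fun i => approxY hker hM (hG i) hPΨ (hvp1 i) hε8pos
  choose yp hypY hyp1 hypG hypΨ using Hyp
  have Hym : ∀ i, ∃ y, y ∈ Y ∧ ‖y‖ ≤ 1 ∧ |G i y - G i (vm i)| < ε8 ∧ |Ψ y - Ψ (vm i)| < ε8 :=
    fun i => approxY hker hM (hG i) hPΨ (hvm1 i) hε8pos
  choose ym hymY hym1 hymG hymΨ using Hym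
  refine ⟨yp, ym, Ψ, hPΨ, hΨ1, ?_, ?_, ?_⟩
  · intro i
    have h := abs_lt.mp (hypG i)
    exact ⟨hypY i, hyp1 i, by linarith [hGvp i]⟩
  · intro i
    have h := abs_lt.mp (hymG i)
    exact ⟨hymY i, hym1 i, by linarith [hGvm i]⟩
  · have hΨw' := happly Ψ
    have hstep : ∑ i, (lam i * (Ψ (vp i) - Ψ (vm i)) - lam i * (2 * ε8))
        ≤ ∑ i, lam i * (Ψ (yp i) - Ψ (ym i)) := by
      apply Finset.sum_le_sum
      intro i _
      have h1 := abs_lt.mp (hypΨ i)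
      have h2 := abs_lt.mp (hymΨ i)
      have h3 : (Ψ (vp i) - Ψ (vm i)) - 2 * ε8 ≤ Ψ (yp i) - Ψ (ym i) := by linarith
      calc lam i * (Ψ (vp i) - Ψ (vm i)) - lam i * (2 * ε8)
          = lam i * ((Ψ (vp i) - Ψ (vm i)) - 2 * ε8) := by ring
        _ ≤ lam i * (Ψ (yp i) - Ψ (ym i)) := mul_le_mul_of_nonneg_left h3 (hlam i)
    have heq : ∑ i, (lam i * (Ψ (vp i) - Ψ (vm i)) - lam i * (2 * ε8))
        = Ψ w - 2 * ε8 := by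
      rw [Finset.sum_sub_distrib, ← hΨw', ← Finset.sum_mul, hsum, one_mul]
    rw [heq] at hstep
    linarith


end MIdealHelpers

theorem stmt_19 (X : Type*) [NormedAddCommGroup X] [NormedSpace ℝ X] [CompleteSpace X] [Nontrivial X]
    (Y : Subspace ℝ X) (hYc : IsClosed (Y : Set X))
    (P : StrongDual ℝ X →L[ℝ] StrongDual ℝ X)
    (hproj : ∀ f, P (P f) = P f)
    (hker : ∀ f : StrongDual ℝ X, P f = 0 ↔ ∀ y ∈ Y, f y = 0)
    (hM : ∀ f : StrongDual ℝ X, ‖f‖ = ‖P f‖ + ‖f - P f‖)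
    (hproper : Y ≠ ⊤)
    (hnorming : ∀ x : X,
      ‖x‖ = sSup {r : ℝ | ∃ f ∈ Set.range P, ‖f‖ ≤ 1 ∧ r = |f x|}) :
    StrongDiameterTwoProp Y ∧ StrongDiameterTwoProp X := by
  constructor
  · -- Y has SD2P
    intro n lam f α hlam hsum hf1 hα
    cases n with
    | zero => simp at hsum
    | succ m =>
    set S : Set ↥Y := {x : ↥Y | ∃ g : Fin (m+1) → ↥Y,
      (∀ i, ‖g i‖ ≤ 1 ∧ 1 - α i < f i (g i)) ∧ x = ∑ i, lam i • g i} with hS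
    have hmemnorm : ∀ x ∈ S, ‖x‖ ≤ 1 := by
      rintro x ⟨g, hg, rfl⟩
      exact comb_norm_le hlam hsum (fun i => (hg i).1)
    have hbounded : Bornology.IsBounded S := by
      apply (Metric.isBounded_closedBall (x := (0 : ↥Y)) (r := 1)).subset
      intro x hx
      exact mem_closedBall_zero_iff.mpr (hmemnorm x hx)
    have hdle : Metric.diam S ≤ 2 := by
      apply Metric.diam_le_of_forall_dist_le (by norm_num)
      intro x hx y hy
      rw [dist_eq_norm]
      calc ‖x - y‖ ≤ ‖x‖ + ‖y‖ := norm_sub_le _ _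
        _ ≤ 2 := by linarith [hmemnorm x hx, hmemnorm y hy]
    apply le_antisymm hdle
    apply le_of_forall_pos_le_add
    intro ε hε
    have hne : (Finset.univ : Finset (Fin (m+1))).Nonempty := Finset.univ_nonempty
    set αmin := Finset.univ.inf' hne α with hαmin
    have hαminpos : 0 < αmin := by
      obtain ⟨i, _, hi⟩ := Finset.exists_mem_eq_inf' hne α
      rw [hαmin, hi]
      exact hα i
    have hαminle : ∀ i, αmin ≤ α i := fun i => Finset.inf'_le α (Finset.mem_univ i)
    set δ := min ε αmin / 8 with hδdef
    have hδpos : 0 < δ := by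
      have := lt_min hε hαminpos
      positivity
    have hδε : 8 * δ ≤ ε := by
      have := min_le_left ε αmin
      rw [hδdef]; linarith
    have hδα : 8 * δ ≤ αmin := by
      have := min_le_right ε αmin
      rw [hδdef]; linarith
    -- extend the functionals
    have Hext : ∀ i, ∃ F : X →L[ℝ] ℝ, (∀ p : ↥Y, F p = f i p) ∧ ‖F‖ = 1 := by
      intro i
      obtain ⟨F, h1, h2⟩ := exists_extension_norm_eq Y (f i)
      exact ⟨F, h1, by rw [h2, hf1 i]⟩
    choose F hFext hFnorm using Hext
    set G : Fin (m+1) → (X →L[ℝ] ℝ) := fun i => P (F i) with hGdef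
    have hPG : ∀ i, P (G i) = G i := fun i => hproj (F i)
    have hGY : ∀ i, ∀ y : X, y ∈ Y → G i y = F i y := by
      intro i y hy
      have h0 : P (F i - G i) = 0 := by
        rw [map_sub]
        show P (F i) - P (G i) = 0
        rw [hPG i, hGdef]
        exact sub_self _
      have h1 := (hker _).mp h0 y hy
      rw [ContinuousLinearMap.sub_apply] at h1
      linarith
    have hGnorm : ∀ i, ‖G i‖ = 1 := by
      intro i
      have h1 : (G i).comp Y.subtypeL = f i := by
        ext p
        show G i (p : X) = f i p
        rw [hGY i p p.2, hFext i p]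
      rw [← norm_restrict hker hM (hPG i), h1, hf1 i]
    obtain ⟨yp, ym, Ψ, hPΨ, hΨ1, hyp, hym, hsep⟩ :=
      core hproj hker hM hnorming hYc hproper hlam hsum hPG hδpos
    set gp : Fin (m+1) → ↥Y := fun i => ⟨yp i, (hyp i).1⟩ with hgp
    set gm : Fin (m+1) → ↥Y := fun i => ⟨ym i, (hym i).1⟩ with hgm
    have hfval : ∀ (i : Fin (m+1)) (z : Fin (m+1) → X) (hz : ∀ j, z j ∈ Y)
        (hn : ‖G i‖ - δ < G i (z i)), 1 - α i < f i ⟨z i, hz i⟩ := by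
      intro i z hz hn
      have h1 : f i ⟨z i, hz i⟩ = G i (z i) := by
        rw [← hFext i ⟨z i, hz i⟩]
        exact (hGY i (z i) (hz i)).symm
      rw [h1, hGnorm i] at *
      have h2 := hαminle i
      have h3 := hα i
      linarith
    have hgpmem : ∀ i, ‖gp i‖ ≤ 1 ∧ 1 - α i < f i (gp i) := by
      intro i
      refine ⟨(hyp i).2.1, ?_⟩
      exact hfval i yp (fun j => (hyp j).1) (hyp i).2.2
    have hgmmem : ∀ i, ‖gm i‖ ≤ 1 ∧ 1 - α i < f i (gm i) := by
      intro i
      refine ⟨(hym i).2.1, ?_⟩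
      exact hfval i ym (fun j => (hym j).1) (hym i).2.2
    set p : ↥Y := ∑ i, lam i • gp i with hpdef
    set q : ↥Y := ∑ i, lam i • gm i with hqdef
    have hpS : p ∈ S := ⟨gp, hgpmem, rfl⟩
    have hqS : q ∈ S := ⟨gm, hgmmem, rfl⟩
    have hcoe : ((p - q : ↥Y) : X) = (∑ i, lam i • yp i) - ∑ i, lam i • ym i := by
      push_cast [hpdef, hqdef]
      rfl
    have hdist : 2 - δ < dist p q := by
      rw [dist_eq_norm]
      have hnorm_eq : ‖p - q‖ = ‖((p - q : ↥Y) : X)‖ := rfl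
      have h1 : Ψ ((p - q : ↥Y) : X) ≤ ‖((p - q : ↥Y) : X)‖ := by
        calc Ψ ((p - q : ↥Y) : X) ≤ |Ψ ((p - q : ↥Y) : X)| := le_abs_self _
          _ = ‖Ψ ((p - q : ↥Y) : X)‖ := (Real.norm_eq_abs _).symm
          _ ≤ ‖Ψ‖ * ‖((p - q : ↥Y) : X)‖ := Ψ.le_opNorm _
          _ ≤ 1 * ‖((p - q : ↥Y) : X)‖ := by
              apply mul_le_mul_of_nonneg_right hΨ1 (norm_nonneg _)
          _ = ‖((p - q : ↥Y) : X)‖ := one_mul _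
      have h2 : Ψ ((p - q : ↥Y) : X) = ∑ i, lam i * (Ψ (yp i) - Ψ (ym i)) := by
        rw [hcoe]
        exact sum_apply_sub Ψ lam yp ym
      rw [hnorm_eq]
      rw [h2] at h1
      linarith
    have hdiam := Metric.dist_le_diam_of_mem hbounded hpS hqS
    linarith
  · -- X has SD2P
    intro n lam f α hlam hsum hf1 hα
    cases n with
    | zero => simp at hsum
    | succ m =>
    set S : Set X := {x : X | ∃ g : Fin (m+1) → X,
      (∀ i, ‖g i‖ ≤ 1 ∧ 1 - α i < f i (g i)) ∧ x = ∑ i, lam i • g i} with hS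
    have hmemnorm : ∀ x ∈ S, ‖x‖ ≤ 1 := by
      rintro x ⟨g, hg, rfl⟩
      exact comb_norm_le hlam hsum (fun i => (hg i).1)
    have hbounded : Bornology.IsBounded S := by
      apply (Metric.isBounded_closedBall (x := (0 : X)) (r := 1)).subset
      intro x hx
      exact mem_closedBall_zero_iff.mpr (hmemnorm x hx)
    have hdle : Metric.diam S ≤ 2 := by
      apply Metric.diam_le_of_forall_dist_le (by norm_num)
      intro x hx y hy
      rw [dist_eq_norm]
      calc ‖x - y‖ ≤ ‖x‖ + ‖y‖ := norm_sub_le _ _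
        _ ≤ 2 := by linarith [hmemnorm x hx, hmemnorm y hy]
    apply le_antisymm hdle
    apply le_of_forall_pos_le_add
    intro ε hε
    have hne : (Finset.univ : Finset (Fin (m+1))).Nonempty := Finset.univ_nonempty
    set αmin := Finset.univ.inf' hne α with hαmin
    have hαminpos : 0 < αmin := by
      obtain ⟨i, _, hi⟩ := Finset.exists_mem_eq_inf' hne α
      rw [hαmin, hi]
      exact hα i
    have hαminle : ∀ i, αmin ≤ α i := fun i => Finset.inf'_le α (Finset.mem_univ i)
    set δ := min ε αmin / 8 with hδdef
    have hδpos : 0 < δ := by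
      have := lt_min hε hαminpos
      positivity
    have hδε : 8 * δ ≤ ε := by
      have := min_le_left ε αmin
      rw [hδdef]; linarith
    have hδα : 8 * δ ≤ αmin := by
      have := min_le_right ε αmin
      rw [hδdef]; linarith
    have Hu : ∀ i, ∃ v : X, ‖v‖ ≤ 1 ∧ 1 - δ < f i v := fun i =>
      exists_unit_ball (f i) (by rw [hf1 i]; linarith)
    choose u hu1 hu2 using Hu
    set G : Fin (m+1) → (X →L[ℝ] ℝ) := fun i => P (f i) with hGdef
    have hPG : ∀ i, P (G i) = G i := fun i => hproj (f i)
    have hMi : ∀ i, ‖G i‖ + ‖f i - G i‖ = 1 := by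
      intro i
      simp only [hGdef]
      rw [← hf1 i]
      exact (hM (f i)).symm
    have hhu : ∀ i, ‖f i - G i‖ - δ < (f i - G i) (u i) := by
      intro i
      have h1 := apply_le_norm (G i) (u i) (hu1 i)
      have h2 := hu2 i
      have h3 := hMi i
      rw [ContinuousLinearMap.sub_apply]
      linarith
    obtain ⟨yp, ym, Ψ, hPΨ, hΨ1, hyp, hym, hsep⟩ :=
      core hproj hker hM hnorming hYc hproper hlam hsum hPG hδpos
    have Ha : ∀ i, ∃ c : X, ‖c‖ ≤ 1 ∧
        |f i c - (G i (yp i) + (f i - G i) (u i))| < δ ∧ |Ψ c - Ψ (yp i)| < δ := by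
      intro i
      obtain ⟨c, h1, h2, h3⟩ := approxX hM (f i) Ψ (hyp i).2.1 (hu1 i) hδpos
      refine ⟨c, h1, ?_, ?_⟩
      · simpa only [hGdef] using h2
      · have heq : (P Ψ) (yp i) + (Ψ - P Ψ) (u i) = Ψ (yp i) := by
          rw [hPΨ]; simp
        rwa [heq] at h3
    choose a ha1 haf haΨ using Ha
    have Hb : ∀ i, ∃ c : X, ‖c‖ ≤ 1 ∧
        |f i c - (G i (ym i) + (f i - G i) (u i))| < δ ∧ |Ψ c - Ψ (ym i)| < δ := by
      intro i
      obtain ⟨c, h1, h2, h3⟩ := approxX hM (f i) Ψ (hym i).2.1 (hu1 i) hδpos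
      refine ⟨c, h1, ?_, ?_⟩
      · simpa only [hGdef] using h2
      · have heq : (P Ψ) (ym i) + (Ψ - P Ψ) (u i) = Ψ (ym i) := by
          rw [hPΨ]; simp
        rwa [heq] at h3
    choose b hb1 hbf hbΨ using Hb
    have hamem : ∀ i, ‖a i‖ ≤ 1 ∧ 1 - α i < f i (a i) := by
      intro i
      refine ⟨ha1 i, ?_⟩
      have h1 := abs_lt.mp (haf i)
      have h2 := (hyp i).2.2
      have h3 := hhu i
      have h4 := hMi i
      have h5 := hαminle i
      have h6 := hα i
      linarith
    have hbmem : ∀ i, ‖b i‖ ≤ 1 ∧ 1 - α i < f i (b i) := by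
      intro i
      refine ⟨hb1 i, ?_⟩
      have h1 := abs_lt.mp (hbf i)
      have h2 := (hym i).2.2
      have h3 := hhu i
      have h4 := hMi i
      have h5 := hαminle i
      have h6 := hα i
      linarith
    set p : X := ∑ i, lam i • a i with hpdef
    set q : X := ∑ i, lam i • b i with hqdef
    have hpS : p ∈ S := ⟨a, hamem, rfl⟩
    have hqS : q ∈ S := ⟨b, hbmem, rfl⟩
    have hdist : 2 - 3 * δ < dist p q := by
      rw [dist_eq_norm]
      have hsum2 : Ψ (p - q) = ∑ i, lam i * (Ψ (a i) - Ψ (b i)) := by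
        rw [hpdef, hqdef]
        exact sum_apply_sub Ψ lam a b
      have hstep : ∑ i, (lam i * (Ψ (yp i) - Ψ (ym i)) - lam i * (2 * δ))
          ≤ ∑ i, lam i * (Ψ (a i) - Ψ (b i)) := by
        apply Finset.sum_le_sum
        intro i _
        have h1 := abs_lt.mp (haΨ i)
        have h2 := abs_lt.mp (hbΨ i)
        have h3 : (Ψ (yp i) - Ψ (ym i)) - 2 * δ ≤ Ψ (a i) - Ψ (b i) := by linarith
        calc lam i * (Ψ (yp i) - Ψ (ym i)) - lam i * (2 * δ)
            = lam i * ((Ψ (yp i) - Ψ (ym i)) - 2 * δ) := by ring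
          _ ≤ lam i * (Ψ (a i) - Ψ (b i)) := mul_le_mul_of_nonneg_left h3 (hlam i)
      have heq : ∑ i, (lam i * (Ψ (yp i) - Ψ (ym i)) - lam i * (2 * δ))
          = (∑ i, lam i * (Ψ (yp i) - Ψ (ym i))) - 2 * δ := by
        rw [Finset.sum_sub_distrib, ← Finset.sum_mul, hsum, one_mul]
      have h4 : 2 - 3 * δ < Ψ (p - q) := by
        rw [hsum2]
        rw [heq] at hstep
        linarith
      have h5 : Ψ (p - q) ≤ ‖p - q‖ := by
        calc Ψ (p - q) ≤ |Ψ (p - q)| := le_abs_self _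
          _ = ‖Ψ (p - q)‖ := (Real.norm_eq_abs _).symm
          _ ≤ ‖Ψ‖ * ‖p - q‖ := Ψ.le_opNorm _
          _ ≤ 1 * ‖p - q‖ := mul_le_mul_of_nonneg_right hΨ1 (norm_nonneg _)
          _ = ‖p - q‖ := one_mul _
      linarith
    have hdiam := Metric.dist_le_diam_of_mem hbounded hpS hqS
    linarith
end
end
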